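/- arXiv:1409.4683 — 2 statements merged into one kernel-verified Lean document; each statement's English description precedes it below -/
import Mathlib

section
/- (Scale-step lemma, single cube version) For every n ≥ 2 there is a constant C_n depending only on n such that the following holds. Let 0 < δ ≤ 1/2, W > 0, and suppose l_{j,a} are lines in ℝ^n, for j = 1, ..., n and a = 1, ..., N_j, each making an angle of at most δ with the x_j-axis. Let T_{j,a,W} be the characteristic function of the W-neighborhood of l_{j,a} and set f_{j,W} = Σ_{a=1}^{N_j} T_{j,a,W}. If Q is any axis-parallel cube whose side length lies between (1/(20n)) δ^{-1} W and (1/(10n)) δ^{-1} W, then ∫_{Q} ∏_{j=1}^n f_{j,W}^{1/(n-1)} ≤ C_n δ^n ∫_{Q} ∏_{j=1}^n f_{j,δ^{-1}W}^{1/(n-1)}. -/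
open MeasureTheory Finset
open scoped ENNReal

noncomputable section

/-- The line in `ℝⁿ` through `p` with direction `v`. -/
def line {n : ℕ} (p v : EuclideanSpace ℝ (Fin n)) : Set (EuclideanSpace ℝ (Fin n)) :=
  {x | ∃ t : ℝ, x = p + t • v}

/-- `ℝ≥0∞`-valued characteristic function of the `W`-neighborhood of the set `A`:
the indicator of `{x : dist(x, A) ≤ W}`. -/
def tubeFn {n : ℕ} (A : Set (EuclideanSpace ℝ (Fin n))) (W : ℝ)
    (x : EuclideanSpace ℝ (Fin n)) : ℝ≥0∞ :=
  Set.indicator {y | Metric.infDist y A ≤ W} 1 x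

/-- Axis-parallel cube with corner `c` and side length `S`. -/
def cube {n : ℕ} (c : EuclideanSpace ℝ (Fin n)) (S : ℝ) : Set (EuclideanSpace ℝ (Fin n)) :=
  {x | ∀ i, x i ∈ Set.Icc (c i) (c i + S)}

/-- The projection `ℝⁿ → ℝ^{n-1}` forgetting the `j`-th coordinate. -/
def proj {n : ℕ} (j : Fin n) (x : EuclideanSpace ℝ (Fin n)) :
    EuclideanSpace ℝ (Fin (n - 1)) :=
  WithLp.toLp 2 (fun i : Fin (n - 1) =>
    if (i : ℕ) < (j : ℕ) then x ⟨i, by omega⟩ else x ⟨i + 1, by omega⟩)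

/-- The graph of `g : ℝ → ℝ^{n-1}` over the `x_j`-axis. -/
def lipGraph {n : ℕ} (j : Fin n) (g : ℝ → EuclideanSpace ℝ (Fin (n - 1))) :
    Set (EuclideanSpace ℝ (Fin n)) :=
  {x | proj j x = g (x j)}

theorem my_lmarginal_finset_sum {δ : Type*} [DecidableEq δ] {π : δ → Type*}
    [∀ i, MeasurableSpace (π i)] (μ : ∀ i, Measure (π i)) {ι : Type*} (A : Finset ι)
    (F : ι → (∀ i, π i) → ℝ≥0∞) (hF : ∀ a ∈ A, Measurable (F a)) (s : Finset δ)
    (x : ∀ i, π i) :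
    (∫⋯∫⁻_s, (fun z => ∑ a ∈ A, F a z) ∂μ) x = ∑ a ∈ A, (∫⋯∫⁻_s, F a ∂μ) x := by
  simp_rw [lmarginal]
  exact lintegral_finset_sum _ (fun a ha => (hF a ha).comp measurable_updateFinset)


theorem my_lw_step {ι : Type*} [Fintype ι] [DecidableEq ι] {A : ι → Type*}
    [∀ i, MeasurableSpace (A i)]
    (μ : ∀ i, Measure (A i)) [∀ i, SigmaFinite (μ i)] {p : ℝ} (hp0 : 0 ≤ p)
    (hp : ((Fintype.card ι : ℝ) - 1) * p = 1)
    (f : ι → (∀ i, A i) → ℝ≥0∞) (hf : ∀ i, Measurable (f i))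
    (hind : ∀ i x t, f i (Function.update x i t) = f i x)
    {s : Finset ι} {j : ι} (hj : j ∉ s) :
    (∫⋯∫⁻_sᶜ, (fun x => ∏ i, ((∫⋯∫⁻_(s.erase i), f i ∂μ) x) ^ p) ∂μ)
      ≤ ∫⋯∫⁻_(insert j s)ᶜ,
          (fun x => ∏ i, ((∫⋯∫⁻_((insert j s).erase i), f i ∂μ) x) ^ p) ∂μ := by
  have hmeas : ∀ (t : Finset ι) i, Measurable (∫⋯∫⁻_t, f i ∂μ) := fun t i => (hf i).lmarginal μ
  have hP : Measurable (fun x => ∏ i, ((∫⋯∫⁻_(s.erase i), f i ∂μ) x) ^ p) :=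
    Finset.measurable_prod _ fun i _ => (hmeas _ i).pow_const _
  have hjc : j ∈ sᶜ := Finset.mem_compl.2 hj
  have hcompl : sᶜ = insert j ((insert j s)ᶜ) := by
    rw [Finset.compl_insert]
    exact (Finset.insert_erase hjc).symm
  have hjc2 : j ∉ (insert j s)ᶜ := by simp
  rw [hcompl, lmarginal_insert' _ hP hjc2]
  apply lmarginal_mono
  intro x
  -- now a single integral over μ j
  have key : ∀ t : A j,
      (fun x => ∏ i, ((∫⋯∫⁻_(s.erase i), f i ∂μ) x) ^ p) (Function.update x j t)
      = ((∫⋯∫⁻_s, f j ∂μ) x) ^ p *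
        ∏ i ∈ univ.erase j, ((∫⋯∫⁻_(s.erase i), f i ∂μ) (Function.update x j t)) ^ p := by
    intro t
    dsimp only
    rw [← Finset.prod_erase_mul _ _ (Finset.mem_univ j)]
    rw [mul_comm]
    congr 2
    rw [Finset.erase_eq_of_notMem hj]
    rw [lmarginal_update_of_notMem (hf j) hj]
    congr 1
    ext z
    simp [hind j z t]
  simp_rw [key]
  have hm2 : Measurable fun t : A j =>
      ∏ i ∈ univ.erase j, ((∫⋯∫⁻_(s.erase i), f i ∂μ) (Function.update x j t)) ^ p :=
    Finset.measurable_prod _ fun i _ => ((hmeas _ i).comp (measurable_update _)).pow_const _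
  rw [lintegral_const_mul _ hm2]
  calc ((∫⋯∫⁻_s, f j ∂μ) x) ^ p *
        ∫⁻ t, ∏ i ∈ univ.erase j, ((∫⋯∫⁻_(s.erase i), f i ∂μ) (Function.update x j t)) ^ p ∂μ j
      ≤ ((∫⋯∫⁻_s, f j ∂μ) x) ^ p *
        ∏ i ∈ univ.erase j, (∫⁻ t, (∫⋯∫⁻_(s.erase i), f i ∂μ) (Function.update x j t) ∂μ j) ^ p := by
        gcongr
        apply ENNReal.lintegral_prod_norm_pow_le
        · exact fun i _ => ((hmeas _ i).comp (measurable_update _)).aemeasurable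
        · rw [Finset.sum_const, Finset.card_erase_of_mem (Finset.mem_univ j), Finset.card_univ,
            nsmul_eq_mul, Nat.cast_sub (Fintype.card_pos_iff.mpr ⟨j⟩), Nat.cast_one, hp]
        · exact fun i _ => hp0
    _ = ∏ i, ((∫⋯∫⁻_((insert j s).erase i), f i ∂μ) x) ^ p := by
        have hfac : ∀ i ∈ univ.erase j,
            (∫⁻ t, (∫⋯∫⁻_(s.erase i), f i ∂μ) (Function.update x j t) ∂μ j) ^ p
            = ((∫⋯∫⁻_((insert j s).erase i), f i ∂μ) x) ^ p := by
          intro i hi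
          have hij : i ≠ j := (Finset.mem_erase.1 hi).1
          have hjnot : j ∉ s.erase i := fun h => hj (Finset.mem_of_mem_erase h)
          rw [← lmarginal_insert _ (hf i) hjnot, Finset.erase_insert_of_ne (Ne.symm hij)]
        rw [Finset.prod_congr rfl hfac, ← Finset.prod_erase_mul _ _ (Finset.mem_univ j),
          Finset.erase_insert hj, mul_comm]

theorem my_lw {ι : Type*} [Fintype ι] [DecidableEq ι] {A : ι → Type*}
    [∀ i, MeasurableSpace (A i)]
    (μ : ∀ i, Measure (A i)) [∀ i, SigmaFinite (μ i)] {p : ℝ} (hp0 : 0 ≤ p)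
    (hp : ((Fintype.card ι : ℝ) - 1) * p = 1)
    (f : ι → (∀ i, A i) → ℝ≥0∞) (hf : ∀ i, Measurable (f i))
    (hind : ∀ i x t, f i (Function.update x i t) = f i x) (x₀ : ∀ i, A i) :
    ∫⁻ x, ∏ i, (f i x) ^ p ∂(Measure.pi μ)
      ≤ ∏ i, ((∫⋯∫⁻_(univ.erase i), f i ∂μ) x₀) ^ p := by
  have key : ∀ s : Finset ι,
      (∫⋯∫⁻_(∅ : Finset ι)ᶜ, (fun x => ∏ i, ((∫⋯∫⁻_((∅ : Finset ι).erase i), f i ∂μ) x) ^ p) ∂μ)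
        ≤ ∫⋯∫⁻_sᶜ, (fun x => ∏ i, ((∫⋯∫⁻_(s.erase i), f i ∂μ) x) ^ p) ∂μ := by
    intro s
    induction s using Finset.induction with
    | empty => exact le_rfl
    | @insert j s hj ih => exact le_trans ih (my_lw_step μ hp0 hp f hf hind hj)
  have h1 := key univ x₀
  simp only [Finset.compl_empty, Finset.compl_univ, Finset.erase_empty, lmarginal_empty,
    lmarginal_univ] at h1
  exact h1
theorem my_coord_le_dist {n : ℕ} (x y : EuclideanSpace ℝ (Fin n)) (i : Fin n) :
    |x i - y i| ≤ dist x y := by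
  rw [EuclideanSpace.dist_eq, ← Real.dist_eq]
  have h1 : dist (x i) (y i) ^ 2 ≤ ∑ i', dist (x i') (y i') ^ 2 :=
    Finset.single_le_sum (f := fun i' => dist (x i') (y i') ^ 2)
      (fun _ _ => sq_nonneg _) (Finset.mem_univ i)
  calc dist (x i) (y i) = √(dist (x i) (y i) ^ 2) := by
        rw [Real.sqrt_sq dist_nonneg]
    _ ≤ _ := Real.sqrt_le_sqrt h1

theorem my_dist_le_of_mem_cube {n : ℕ} {c : EuclideanSpace ℝ (Fin n)} {L : ℝ}
    {x y : EuclideanSpace ℝ (Fin n)} (hL : 0 ≤ L) (hx : x ∈ cube c L) (hy : y ∈ cube c L) :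
    dist x y ≤ n * L := by
  rw [EuclideanSpace.dist_eq]
  have h1 : ∀ i, dist (x i) (y i) ^ 2 ≤ L ^ 2 := by
    intro i
    have hxi := hx i
    have hyi := hy i
    simp only [Set.mem_Icc] at hxi hyi
    have habs : |x i - y i| ≤ L := by
      rw [abs_le]
      exact ⟨by linarith [hxi.1, hxi.2, hyi.1, hyi.2], by linarith [hxi.1, hxi.2, hyi.1, hyi.2]⟩
    calc dist (x i) (y i) ^ 2 = |x i - y i| ^ 2 := by rw [Real.dist_eq, sq_abs]
      _ ≤ L ^ 2 := by
          have h0 : 0 ≤ |x i - y i| := abs_nonneg _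
          nlinarith
  calc √(∑ i, dist (x i) (y i) ^ 2) ≤ √(∑ _i : Fin n, L ^ 2) :=
        Real.sqrt_le_sqrt (Finset.sum_le_sum fun i _ => h1 i)
    _ ≤ √((n * L) ^ 2) := by
        apply Real.sqrt_le_sqrt
        rw [Finset.sum_const, Finset.card_univ, Fintype.card_fin, nsmul_eq_mul]
        have h2 : (0:ℝ) ≤ (n:ℝ) := Nat.cast_nonneg n
        have h3 : (n:ℝ) ≤ (n:ℝ) ^ 2 := by
          have := Nat.le_self_pow (two_ne_zero) n
          exact_mod_cast this
        nlinarith [sq_nonneg L]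
    _ = n * L := Real.sqrt_sq (by positivity)

theorem my_direction_coords {n : ℕ} {j : Fin n} {v : EuclideanSpace ℝ (Fin n)} {δ : ℝ}
    (hv : ‖v‖ = 1) (hangle : InnerProductGeometry.angle v (EuclideanSpace.single j 1) ≤ δ)
    (hδ : 0 < δ) (hδ2 : δ ≤ 1 / 2) :
    1 / 2 ≤ v j ∧ ∀ i, i ≠ j → |v i| ≤ δ := by
  have hδπ : δ ≤ Real.pi := le_trans (by linarith) (by linarith [Real.pi_gt_three])
  have hcos : Real.cos δ ≤ v j := by
    have h1 : Real.cos δ ≤ Real.cos (InnerProductGeometry.angle v (EuclideanSpace.single j 1)) :=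
      Real.cos_le_cos_of_nonneg_of_le_pi (InnerProductGeometry.angle_nonneg _ _) hδπ hangle
    have h2 : Real.cos (InnerProductGeometry.angle v (EuclideanSpace.single j 1))
        = inner ℝ v (EuclideanSpace.single j 1) := by
      rw [InnerProductGeometry.cos_angle, hv, EuclideanSpace.norm_single]
      simp
    have h3 : (inner ℝ v (EuclideanSpace.single j 1) : ℝ) = v j := by
      rw [EuclideanSpace.inner_single_right]
      simp
    rw [h2, h3] at h1
    exact h1
  have hcosge : (1:ℝ) / 2 ≤ Real.cos δ := by
    have := Real.one_sub_sq_div_two_le_cos (x := δ)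
    nlinarith
  refine ⟨le_trans hcosge hcos, fun i hij => ?_⟩
  have hsum : ∑ i', v i' ^ 2 = 1 := by
    have := EuclideanSpace.norm_eq v
    rw [hv] at this
    have h4 : (0:ℝ) ≤ ∑ i', v i' ^ 2 := Finset.sum_nonneg fun _ _ => sq_nonneg _
    have := congrArg (· ^ 2) this
    simp only [one_pow] at this
    rw [Real.sq_sqrt (by simpa using h4)] at this
    simpa using this.symm
  have hpair : v i ^ 2 + v j ^ 2 ≤ 1 := by
    rw [← hsum]
    have : ∑ i' ∈ {i, j}, v i' ^ 2 ≤ ∑ i', v i' ^ 2 :=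
      Finset.sum_le_sum_of_subset_of_nonneg (Finset.subset_univ _) fun _ _ _ => sq_nonneg _
    rwa [Finset.sum_pair hij] at this
  have hsin : v i ^ 2 ≤ Real.sin δ ^ 2 := by
    have hc2 : Real.cos δ ^ 2 ≤ v j ^ 2 := by nlinarith
    have := Real.sin_sq_add_cos_sq δ
    nlinarith
  have hsinδ : Real.sin δ ≤ δ := Real.sin_le hδ.le
  have hsin0 : 0 ≤ Real.sin δ := Real.sin_nonneg_of_nonneg_of_le_pi hδ.le hδπ
  calc |v i| = √(v i ^ 2) := (Real.sqrt_sq_eq_abs _).symm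
    _ ≤ √(δ ^ 2) := Real.sqrt_le_sqrt (by nlinarith)
    _ = δ := Real.sqrt_sq hδ.le

theorem my_line_coord {n : ℕ} (p v : EuclideanSpace ℝ (Fin n)) (t : ℝ) (i : Fin n) :
    (p + t • v) i = p i + t * v i := rfl

theorem my_big_tube {n : ℕ} {c : EuclideanSpace ℝ (Fin n)} {L W δ : ℝ}
    {q v x x₀ : EuclideanSpace ℝ (Fin n)} (hL : 0 ≤ L)
    (hδ : 0 < δ) (hδ2 : δ ≤ 1 / 2) (hW : 0 < W)
    (hnL : (n : ℝ) * L ≤ δ⁻¹ * W / 2)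
    (hx : x ∈ cube c L) (hx₀ : x₀ ∈ cube c L)
    (hT : Metric.infDist x₀ (line q v) ≤ W) :
    Metric.infDist x (line q v) ≤ δ⁻¹ * W := by
  have hd : dist x x₀ ≤ (n : ℝ) * L := my_dist_le_of_mem_cube hL hx hx₀
  have h1 : Metric.infDist x (line q v) ≤ Metric.infDist x₀ (line q v) + dist x x₀ :=
    Metric.infDist_le_infDist_add_dist
  have hinv : 2 ≤ δ⁻¹ := by
    have h2 : δ * δ⁻¹ = 1 := mul_inv_cancel₀ hδ.ne'
    nlinarith [inv_pos.mpr hδ]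
  nlinarith [hW.le]

theorem my_slab_bound {n : ℕ} {c : EuclideanSpace ℝ (Fin n)} {L W δ : ℝ} {j : Fin n}
    {q v x x₀ : EuclideanSpace ℝ (Fin n)}
    (hδ : 0 < δ) (hδ2 : δ ≤ 1 / 2) (hW : 0 < W) (hdL : δ * L ≤ W)
    (hvj : 1 / 2 ≤ v j) (hvi : ∀ i, i ≠ j → |v i| ≤ δ)
    (hx : x ∈ cube c L) (hx₀ : x₀ ∈ cube c L)
    (hxT : Metric.infDist x (line q v) ≤ W)
    (hx₀T : Metric.infDist x₀ (line q v) ≤ W) :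
    ∀ i, i ≠ j → |x i - x₀ i| ≤ 10 * W := by
  have hne : (line q v).Nonempty := ⟨q, 0, by simp⟩
  obtain ⟨y, hy, hdy⟩ := (Metric.infDist_lt_iff hne).1
    (show Metric.infDist x (line q v) < 2 * W by linarith)
  obtain ⟨y₀, hy₀, hdy₀⟩ := (Metric.infDist_lt_iff hne).1
    (show Metric.infDist x₀ (line q v) < 2 * W by linarith)
  obtain ⟨t, rfl⟩ := hy
  obtain ⟨t₀, rfl⟩ := hy₀
  have hL : 0 ≤ L := by
    have h1 := hx j
    simp only [Set.mem_Icc] at h1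
    have h2 := hx₀ j  -- unused
    linarith [h1.1, h1.2, (hx₀ j).1, (hx₀ j).2,
      abs_nonneg (x j - x₀ j), abs_sub_abs_le_abs_sub (x j) (x₀ j)]
  -- coordinate distances to the line points
  have hcoord : ∀ i : Fin n, |x i - (q + t • v) i| ≤ 2 * W :=
    fun i => le_trans (my_coord_le_dist _ _ i) (by linarith)
  have hcoord₀ : ∀ i : Fin n, |x₀ i - (q + t₀ • v) i| ≤ 2 * W :=
    fun i => le_trans (my_coord_le_dist _ _ i) (by linarith)
  -- bound |t - t₀|
  have hxj : |x j - x₀ j| ≤ L := by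
    have h1 := hx j; have h2 := hx₀ j
    simp only [Set.mem_Icc] at h1 h2
    rw [abs_le]
    exact ⟨by linarith [h1.1, h1.2, h2.1, h2.2], by linarith [h1.1, h1.2, h2.1, h2.2]⟩
  have htt : |t - t₀| ≤ 2 * L + 8 * W := by
    have h1 : |(t - t₀) * v j| ≤ 4 * W + L := by
      have e1 : (t - t₀) * v j = (x j - x₀ j) - (x j - (q + t • v) j) + (x₀ j - (q + t₀ • v) j) := by
        simp only [my_line_coord]; ring
      rw [e1]
      calc |(x j - x₀ j) - (x j - (q + t • v) j) + (x₀ j - (q + t₀ • v) j)|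
          ≤ |(x j - x₀ j) - (x j - (q + t • v) j)| + |x₀ j - (q + t₀ • v) j| := abs_add_le _ _
        _ ≤ |x j - x₀ j| + |x j - (q + t • v) j| + |x₀ j - (q + t₀ • v) j| := by
            linarith [abs_sub (x j - x₀ j) (x j - (q + t • v) j)]
        _ ≤ 4 * W + L := by linarith [hcoord j, hcoord₀ j, hxj]
    have h2 : |t - t₀| * (1/2) ≤ |(t - t₀) * v j| := by
      rw [abs_mul]
      apply mul_le_mul_of_nonneg_left _ (abs_nonneg _)
      rw [abs_of_nonneg (by linarith : (0:ℝ) ≤ v j)]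
      exact hvj
    nlinarith [abs_nonneg (t - t₀)]
  intro i hij
  have e2 : x i - x₀ i = (x i - (q + t • v) i) - (x₀ i - (q + t₀ • v) i) + (t - t₀) * v i := by
    simp only [my_line_coord]; ring
  have h3 : |(t - t₀) * v i| ≤ (2 * L + 8 * W) * δ := by
    rw [abs_mul]
    exact mul_le_mul htt (hvi i hij) (abs_nonneg _) (by linarith [abs_nonneg (t - t₀)])
  calc |x i - x₀ i| ≤ |x i - (q + t • v) i| + |x₀ i - (q + t₀ • v) i| + |(t - t₀) * v i| := by
        rw [e2]
        refine le_trans (abs_add_le _ _) ?_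
        gcongr
        exact abs_sub _ _
    _ ≤ 2 * W + 2 * W + (2 * L + 8 * W) * δ := by linarith [hcoord i, hcoord₀ i, h3]
    _ ≤ 10 * W := by nlinarith


theorem my_lmarginal_box {δ : Type*} [DecidableEq δ] {π : δ → Type*}
    [∀ i, MeasurableSpace (π i)] (μ : ∀ i, Measure (π i)) [∀ i, SigmaFinite (μ i)]
    (s : Finset δ) (I : ∀ i, Set (π i)) (hI : ∀ i, MeasurableSet (I i)) (x : ∀ i, π i) :
    (∫⋯∫⁻_s, Set.indicator {z | ∀ i ∈ s, z i ∈ I i} 1 ∂μ) x = ∏ i ∈ s, μ i (I i) := by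
  rw [lmarginal]
  have key : ∀ y : ∀ i : s, π i,
      Set.indicator {z : ∀ i, π i | ∀ i ∈ s, z i ∈ I i} 1 (Function.updateFinset x s y)
      = Set.indicator (Set.univ.pi fun i : s => I i) (1 : (∀ i : s, π i) → ℝ≥0∞) y := by
    intro y
    classical
    have hiff : (Function.updateFinset x s y ∈ {z : ∀ i, π i | ∀ i ∈ s, z i ∈ I i}) ↔
        y ∈ Set.univ.pi fun i : s => I i := by
      constructor
      · intro h i _
        have := h i i.2
        rwa [Function.updateFinset, dif_pos i.2] at this
      · intro h i hi
        have := h ⟨i, hi⟩ (Set.mem_univ _)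
        rwa [Function.updateFinset, dif_pos hi]
    rw [Set.indicator_apply, Set.indicator_apply, if_congr hiff rfl rfl]
    simp
  simp_rw [key]
  rw [lintegral_indicator_one (MeasurableSet.univ_pi fun i : s => hI i)]
  rw [Measure.pi_pi]
  exact Finset.prod_coe_sort s (fun i => μ i (I i))

/-- Scale-step lemma, single cube version: there is `C_n` such that for `0 < δ ≤ 1/2`,
`W > 0`, lines making angle at most `δ` with the corresponding axes, and any cube `Q` of side
length between `(20n)⁻¹ δ⁻¹ W` and `(10n)⁻¹ δ⁻¹ W`,
`∫_Q ∏_j f_{j,W}^{1/(n-1)} ≤ C_n δⁿ ∫_Q ∏_j f_{j,δ⁻¹W}^{1/(n-1)}`. -/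
theorem scale_step_single_cube (n : ℕ) (hn : 2 ≤ n) :
    ∃ C : ℝ, 0 < C ∧
      ∀ (δ W : ℝ), 0 < δ → δ ≤ 1 / 2 → 0 < W →
      ∀ (N : Fin n → ℕ) (p v : (j : Fin n) → Fin (N j) → EuclideanSpace ℝ (Fin n)),
        (∀ j a, ‖v j a‖ = 1) →
        (∀ j a, InnerProductGeometry.angle (v j a) (EuclideanSpace.single j 1) ≤ δ) →
        ∀ L : ℝ, (1 / (20 * n)) * δ⁻¹ * W ≤ L → L ≤ (1 / (10 * n)) * δ⁻¹ * W →
        ∀ c : EuclideanSpace ℝ (Fin n),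
          ∫⁻ x in cube c L,
              ∏ j : Fin n, (∑ a : Fin (N j),
                tubeFn (line (p j a) (v j a)) W x) ^ ((1 : ℝ) / ((n : ℝ) - 1))
            ≤ ENNReal.ofReal (C * δ ^ n) *
                ∫⁻ x in cube c L,
                  ∏ j : Fin n, (∑ a : Fin (N j),
                    tubeFn (line (p j a) (v j a)) (δ⁻¹ * W) x) ^ ((1 : ℝ) / ((n : ℝ) - 1)) := by
  classical
  have hn0 : 0 < n := by omega
  refine ⟨(400 * n) ^ n, by positivity, ?_⟩
  intro δ W hδ hδ2 hW N pt dir hnorm hangle L hL1 hL2 c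
  have hnR : (2:ℝ) ≤ (n:ℝ) := by exact_mod_cast hn
  have hnpos : (0:ℝ) < (n:ℝ) := by linarith
  have hn1 : (1:ℝ) ≤ (n:ℝ) - 1 := by linarith
  set pex : ℝ := (1:ℝ) / ((n:ℝ) - 1) with hpexdef
  have hpexpos : 0 < pex := div_pos one_pos (by linarith)
  have hpex0 : (0:ℝ) ≤ pex := hpexpos.le
  have hδinv : δ * δ⁻¹ = 1 := mul_inv_cancel₀ hδ.ne'
  have h20n : (0:ℝ) < 20 * (n:ℝ) := by linarith
  have h10n : (0:ℝ) < 10 * (n:ℝ) := by linarith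
  have hδipos : (0:ℝ) < δ⁻¹ := inv_pos.2 hδ
  have hL0 : 0 < L :=
    lt_of_lt_of_le (mul_pos (mul_pos (one_div_pos.2 h20n) hδipos) hW) hL1
  -- basic real inequalities
  have hδL : δ * L ≤ W := by
    have h1 : δ * L ≤ δ * (1 / (10 * n) * δ⁻¹ * W) := mul_le_mul_of_nonneg_left hL2 hδ.le
    have h2 : δ * (1 / (10 * n) * δ⁻¹ * W) = 1 / (10 * n) * W := by
      field_simp
    have h3 : 1 / (10 * (n:ℝ)) * W ≤ W := by
      have : 1 / (10 * (n:ℝ)) ≤ 1 := by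
        rw [div_le_one h10n]; linarith
      nlinarith
    linarith
  have hnL : (n : ℝ) * L ≤ δ⁻¹ * W / 2 := by
    have h1 : (n:ℝ) * L ≤ (n:ℝ) * (1 / (10 * n) * δ⁻¹ * W) :=
      mul_le_mul_of_nonneg_left hL2 hnpos.le
    have h2 : (n:ℝ) * (1 / (10 * n) * δ⁻¹ * W) = δ⁻¹ * W / 10 := by
      field_simp
    have h3 : (0:ℝ) < δ⁻¹ * W := mul_pos hδipos hW
    linarith
  have hWL : 20 * W ≤ 400 * n * (δ * L) := by
    have h1 : 20 * (n:ℝ) * δ * (1 / (20 * n) * δ⁻¹ * W) ≤ 20 * n * δ * L :=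
      mul_le_mul_of_nonneg_left hL1 (by positivity)
    have h2 : 20 * (n:ℝ) * δ * (1 / (20 * n) * δ⁻¹ * W) = W := by
      field_simp
    nlinarith
  -- direction coordinate estimates
  have hdir : ∀ j a, 1 / 2 ≤ dir j a j ∧ ∀ i, i ≠ j → |dir j a i| ≤ δ :=
    fun j a => my_direction_coords (hnorm j a) (hangle j a) hδ hδ2
  -- the set of tubes meeting the cube
  obtain ⟨A, hA⟩ : ∃ A : ∀ j : Fin n, Finset (Fin (N j)), ∀ j a, a ∈ A j ↔
      ∃ x ∈ cube c L, Metric.infDist x (line (pt j a) (dir j a)) ≤ W :=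
    ⟨fun j => Finset.univ.filter
        (fun a => ∃ x ∈ cube c L, Metric.infDist x (line (pt j a) (dir j a)) ≤ W),
      fun j a => by simp [Finset.mem_filter]⟩
  -- witnesses
  have hchoice : ∀ (j : Fin n) (a : Fin (N j)), ∃ z : EuclideanSpace ℝ (Fin n),
      a ∈ A j → z ∈ cube c L ∧ Metric.infDist z (line (pt j a) (dir j a)) ≤ W := by
    intro j a
    by_cases ha : a ∈ A j
    · obtain ⟨z, hz1, hz2⟩ := (hA j a).1 ha
      exact ⟨z, fun _ => ⟨hz1, hz2⟩⟩
    · exact ⟨c, fun h => absurd h ha⟩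
  choose xw hxw using hchoice
  -- the slab functions
  obtain ⟨G, hGdef⟩ : ∃ G : Fin n → (Fin n → ℝ) → ℝ≥0∞, ∀ j z,
      G j z = ∑ a ∈ A j, Set.indicator
        {z' : Fin n → ℝ | ∀ i ∈ Finset.univ.erase j,
          z' i ∈ Set.Icc (xw j a i - 10 * W) (xw j a i + 10 * W)} 1 z :=
    ⟨fun j z => ∑ a ∈ A j, Set.indicator _ 1 z, fun _ _ => rfl⟩
  -- measurability
  have htube : ∀ (j : Fin n) (a : Fin (N j)) (W' : ℝ),
      Measurable (tubeFn (line (pt j a) (dir j a)) W') := by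
    intro j a W'
    exact measurable_one.indicator
      ((isClosed_le (Metric.continuous_infDist_pt _) continuous_const).measurableSet)
  have hBoxMeas : ∀ (j : Fin n) (a : Fin (N j)), MeasurableSet
      {z' : Fin n → ℝ | ∀ i ∈ Finset.univ.erase j,
        z' i ∈ Set.Icc (xw j a i - 10 * W) (xw j a i + 10 * W)} := by
    intro j a
    have heq : {z' : Fin n → ℝ | ∀ i ∈ Finset.univ.erase j,
        z' i ∈ Set.Icc (xw j a i - 10 * W) (xw j a i + 10 * W)}
        = Set.pi (↑(Finset.univ.erase j))
            (fun i => Set.Icc (xw j a i - 10 * W) (xw j a i + 10 * W)) := by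
      ext z'; simp [Set.mem_pi]
    rw [heq]
    exact MeasurableSet.pi (Finset.univ.erase j).countable_toSet fun i _ => measurableSet_Icc
  have hGmeas : ∀ j, Measurable (G j) := by
    intro j
    have : G j = fun z => ∑ a ∈ A j, Set.indicator
        {z' : Fin n → ℝ | ∀ i ∈ Finset.univ.erase j,
          z' i ∈ Set.Icc (xw j a i - 10 * W) (xw j a i + 10 * W)} 1 z :=
      funext fun z => hGdef j z
    rw [this]
    exact Finset.measurable_sum _ fun a _ => measurable_one.indicator (hBoxMeas j a)
  have hGind : ∀ (j : Fin n) (z : Fin n → ℝ) (t : ℝ),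
      G j (Function.update z j t) = G j z := by
    intro j z t
    rw [hGdef, hGdef]
    refine Finset.sum_congr rfl fun a _ => ?_
    have hmemiff : (Function.update z j t ∈ {z' : Fin n → ℝ | ∀ i ∈ Finset.univ.erase j,
        z' i ∈ Set.Icc (xw j a i - 10 * W) (xw j a i + 10 * W)}) ↔
        (z ∈ {z' : Fin n → ℝ | ∀ i ∈ Finset.univ.erase j,
        z' i ∈ Set.Icc (xw j a i - 10 * W) (xw j a i + 10 * W)}) := by
      constructor
      · intro h i hi
        have h2 := h i hi
        rwa [Function.update_of_ne (Finset.mem_erase.1 hi).1] at h2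
      · intro h i hi
        rw [Function.update_of_ne (Finset.mem_erase.1 hi).1]
        exact h i hi
    rw [Set.indicator_apply, Set.indicator_apply, if_congr hmemiff rfl rfl]
    simp
  -- volume of the cube
  have hvolQ : volume (cube c L) = ENNReal.ofReal (L ^ n) := by
    have hpre : cube c L = (MeasurableEquiv.toLp 2 (Fin n → ℝ)).symm ⁻¹'
        (Set.univ.pi fun i : Fin n => Set.Icc (c i) (c i + L)) := by
      ext x
      constructor
      · intro h i _
        exact h i
      · intro h i
        exact h i (Set.mem_univ i)
    rw [hpre, (EuclideanSpace.volume_preserving_symm_measurableEquiv_toLp (Fin n)).measure_preimage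
      (MeasurableSet.univ_pi fun i => measurableSet_Icc).nullMeasurableSet]
    rw [volume_pi_pi]
    simp only [Real.volume_Icc, add_sub_cancel_left]
    rw [Finset.prod_const, Finset.card_univ, Fintype.card_fin, ← ENNReal.ofReal_pow hL0.le]
  -- lower bound for the RHS integral
  have hRHSlow : (∏ j, ((A j).card : ℝ≥0∞) ^ pex) * ENNReal.ofReal (L ^ n)
      ≤ ∫⁻ x in cube c L, ∏ j, (∑ a : Fin (N j),
          tubeFn (line (pt j a) (dir j a)) (δ⁻¹ * W) x) ^ pex := by
    rw [← hvolQ, ← setLIntegral_const]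
    apply setLIntegral_mono
    · exact Finset.measurable_prod _ fun j _ =>
        (Finset.measurable_sum _ fun a _ => htube j a _).pow_const _
    · intro x hx
      refine Finset.prod_le_prod' fun j _ => ENNReal.rpow_le_rpow ?_ hpex0
      calc ((A j).card : ℝ≥0∞) = ∑ a ∈ A j, 1 := by simp
        _ ≤ ∑ a ∈ A j, tubeFn (line (pt j a) (dir j a)) (δ⁻¹ * W) x := by
            refine Finset.sum_le_sum fun a ha => ?_
            have h2 := hxw j a ha
            have h3 : Metric.infDist x (line (pt j a) (dir j a)) ≤ δ⁻¹ * W :=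
              my_big_tube hL0.le hδ hδ2 hW hnL hx h2.1 h2.2
            have h4 : tubeFn (line (pt j a) (dir j a)) (δ⁻¹ * W) x = 1 := by
              rw [tubeFn, Set.indicator_of_mem (show x ∈ {y | Metric.infDist y
                (line (pt j a) (dir j a)) ≤ δ⁻¹ * W} from h3)]
              rfl
            rw [h4]
        _ ≤ ∑ a : Fin (N j), tubeFn (line (pt j a) (dir j a)) (δ⁻¹ * W) x :=
            Finset.sum_le_sum_of_subset (Finset.subset_univ _)
  -- pointwise domination on the cube
  have hGdom : ∀ (j : Fin n), ∀ x ∈ cube c L,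
      (∑ a : Fin (N j), tubeFn (line (pt j a) (dir j a)) W x) ≤ G j (fun i => x i) := by
    intro j x hx
    rw [hGdef]
    have hzero : ∀ a ∈ (Finset.univ : Finset (Fin (N j))), a ∉ A j →
        tubeFn (line (pt j a) (dir j a)) W x = 0 := by
      intro a _ ha
      rw [tubeFn]
      apply Set.indicator_of_notMem
      intro hmem
      exact ha ((hA j a).2 ⟨x, hx, hmem⟩)
    rw [← Finset.sum_subset (Finset.subset_univ (A j)) hzero]
    refine Finset.sum_le_sum fun a ha => ?_
    by_cases hmem : x ∈ {y | Metric.infDist y (line (pt j a) (dir j a)) ≤ W}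
    · have h10W := my_slab_bound hδ hδ2 hW hδL (hdir j a).1
        (fun i hij => (hdir j a).2 i hij) hx (hxw j a ha).1 hmem (hxw j a ha).2
      have hbox : (fun i => x i) ∈ {z' : Fin n → ℝ | ∀ i ∈ Finset.univ.erase j,
          z' i ∈ Set.Icc (xw j a i - 10 * W) (xw j a i + 10 * W)} := by
        intro i hi
        have h5 := abs_le.1 (h10W i (Finset.mem_erase.1 hi).1)
        exact ⟨by linarith [h5.1, h5.2], by linarith [h5.1, h5.2]⟩
      rw [tubeFn, Set.indicator_of_mem hmem, Set.indicator_of_mem hbox]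
      exact le_rfl
    · rw [tubeFn, Set.indicator_of_notMem hmem]
      exact zero_le
  -- Loomis–Whitney bound
  have hcard1 : ((Fintype.card (Fin n) : ℝ) - 1) * pex = 1 := by
    rw [Fintype.card_fin, hpexdef, mul_one_div_cancel (by linarith : (n:ℝ) - 1 ≠ 0)]
  have hLW := my_lw (fun _ : Fin n => (volume : Measure ℝ)) hpex0 hcard1 G hGmeas hGind
    (fun _ => (0:ℝ))
  -- the marginal computation
  have hmarg : ∀ j : Fin n,
      (∫⋯∫⁻_(Finset.univ.erase j), G j ∂(fun _ => (volume : Measure ℝ))) (fun _ => (0:ℝ))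
      = ((A j).card : ℝ≥0∞) * (ENNReal.ofReal (20 * W)) ^ (n - 1) := by
    intro j
    have h1 : G j = fun z => ∑ a ∈ A j, Set.indicator
        {z' : Fin n → ℝ | ∀ i ∈ Finset.univ.erase j,
          z' i ∈ Set.Icc (xw j a i - 10 * W) (xw j a i + 10 * W)} 1 z :=
      funext fun z => hGdef j z
    rw [h1, my_lmarginal_finset_sum _ _ _
      (fun a _ => measurable_one.indicator (hBoxMeas j a))]
    have h2 : ∀ a ∈ A j, (∫⋯∫⁻_(Finset.univ.erase j), Set.indicator
        {z' : Fin n → ℝ | ∀ i ∈ Finset.univ.erase j,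
          z' i ∈ Set.Icc (xw j a i - 10 * W) (xw j a i + 10 * W)} 1
        ∂(fun _ => (volume : Measure ℝ))) (fun _ => (0:ℝ))
        = (ENNReal.ofReal (20 * W)) ^ (n - 1) := by
      intro a _
      rw [my_lmarginal_box _ _ _ (fun i => measurableSet_Icc) _]
      have h3 : ∀ i : Fin n, volume (Set.Icc (xw j a i - 10 * W) (xw j a i + 10 * W))
          = ENNReal.ofReal (20 * W) := by
        intro i
        rw [Real.volume_Icc]
        congr 1
        ring
      rw [Finset.prod_congr rfl fun i _ => h3 i, Finset.prod_const,
        Finset.card_erase_of_mem (Finset.mem_univ j), Finset.card_univ, Fintype.card_fin]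
    rw [Finset.sum_congr rfl h2, Finset.sum_const, nsmul_eq_mul]
  -- rpow arithmetic
  have hKpex : ((ENNReal.ofReal (20 * W)) ^ (n - 1) : ℝ≥0∞) ^ pex = ENNReal.ofReal (20 * W) := by
    rw [← ENNReal.rpow_natCast (ENNReal.ofReal (20 * W)) (n - 1), ← ENNReal.rpow_mul]
    have hc : ((n - 1 : ℕ) : ℝ) = (n : ℝ) - 1 := by
      rw [Nat.cast_sub (by omega : 1 ≤ n), Nat.cast_one]
    rw [hc, hpexdef, mul_one_div_cancel (by linarith : (n:ℝ) - 1 ≠ 0), ENNReal.rpow_one]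
  have hsplit : ∏ j, (((A j).card : ℝ≥0∞) * (ENNReal.ofReal (20 * W)) ^ (n - 1)) ^ pex
      = (∏ j, ((A j).card : ℝ≥0∞) ^ pex) * ENNReal.ofReal ((20 * W) ^ n) := by
    simp_rw [ENNReal.mul_rpow_of_nonneg _ _ hpex0]
    rw [Finset.prod_mul_distrib]
    congr 1
    rw [Finset.prod_congr rfl fun j _ => hKpex, Finset.prod_const, Finset.card_univ,
      Fintype.card_fin, ← ENNReal.ofReal_pow (by positivity)]
  -- final constant comparison
  have hfinal : ENNReal.ofReal ((20 * W) ^ n)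
      ≤ ENNReal.ofReal ((400 * n) ^ n * δ ^ n) * ENNReal.ofReal (L ^ n) := by
    rw [← ENNReal.ofReal_mul (by positivity)]
    apply ENNReal.ofReal_le_ofReal
    calc (20 * W) ^ n ≤ (400 * n * (δ * L)) ^ n :=
          pow_le_pow_left₀ (by positivity) hWL n
      _ = (400 * n) ^ n * δ ^ n * L ^ n := by rw [mul_pow, mul_pow]; ring
  -- assemble
  calc ∫⁻ x in cube c L, ∏ j : Fin n, (∑ a : Fin (N j),
          tubeFn (line (pt j a) (dir j a)) W x) ^ pex
      ≤ ∫⁻ x in cube c L,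
          (fun z => ∏ j : Fin n, (G j z) ^ pex)
            ((MeasurableEquiv.toLp 2 (Fin n → ℝ)).symm x) := by
        apply setLIntegral_mono
        · exact (Finset.measurable_prod _ fun j _ => (hGmeas j).pow_const _).comp
            (MeasurableEquiv.toLp 2 (Fin n → ℝ)).symm.measurable
        · intro x hx
          exact Finset.prod_le_prod' fun j _ =>
            ENNReal.rpow_le_rpow (hGdom j x hx) hpex0
    _ ≤ ∫⁻ x, (fun z => ∏ j : Fin n, (G j z) ^ pex)
            ((MeasurableEquiv.toLp 2 (Fin n → ℝ)).symm x) :=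
        setLIntegral_le_lintegral _ _
    _ = ∫⁻ z, ∏ j : Fin n, (G j z) ^ pex := by
        exact (EuclideanSpace.volume_preserving_symm_measurableEquiv_toLp (Fin n)).lintegral_comp
          (Finset.measurable_prod _ fun j _ => (hGmeas j).pow_const _)
    _ = ∫⁻ z, ∏ j : Fin n, (G j z) ^ pex ∂(Measure.pi fun _ => (volume : Measure ℝ)) := by
        rw [MeasureTheory.volume_pi]
    _ ≤ ∏ j, ((∫⋯∫⁻_(Finset.univ.erase j), G j ∂(fun _ => (volume : Measure ℝ)))
          (fun _ => (0:ℝ))) ^ pex := hLW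
    _ = (∏ j, ((A j).card : ℝ≥0∞) ^ pex) * ENNReal.ofReal ((20 * W) ^ n) := by
        rw [Finset.prod_congr rfl fun j _ => by rw [hmarg j], hsplit]
    _ ≤ (∏ j, ((A j).card : ℝ≥0∞) ^ pex) *
          (ENNReal.ofReal ((400 * n) ^ n * δ ^ n) * ENNReal.ofReal (L ^ n)) :=
        mul_le_mul_right hfinal _
    _ = ENNReal.ofReal ((400 * n) ^ n * δ ^ n) *
          ((∏ j, ((A j).card : ℝ≥0∞) ^ pex) * ENNReal.ofReal (L ^ n)) := by ring
    _ ≤ ENNReal.ofReal ((400 * n) ^ n * δ ^ n) *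
          ∫⁻ x in cube c L, ∏ j, (∑ a : Fin (N j),
            tubeFn (line (pt j a) (dir j a)) (δ⁻¹ * W) x) ^ pex :=
        mul_le_mul_right hRHSlow _
end
end

section
/- (Iterated scale-step bound at powers of δ^{-1}) For every n ≥ 2 there is a constant C_n depending only on n such that the following holds. Let 0 < δ ≤ 1/2 and suppose l_{j,a} are lines in ℝ^n, for j = 1, ..., n and a = 1, ..., N_j, each making an angle of at most δ with the x_j-axis, and let T_{j,a} be the characteristic function of the 1-neighborhood of l_{j,a}. Then for every integer M ≥ 0 and every axis-parallel cube Q of side length δ^{-M}, ∫_{Q} ∏_{j=1}^n ( Σ_{a=1}^{N_j} T_{j,a} )^{1/(n-1)} ≤ C_n^M ∏_{j=1}^n N_j^{1/(n-1)}. -/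
open MeasureTheory Finset Function
open scoped ENNReal

noncomputable section

variable {n : ℕ}

lemma line_nonempty (p v : EuclideanSpace ℝ (Fin n)) : (line p v).Nonempty :=
  ⟨p + (0:ℝ) • v, 0, rfl⟩

lemma coord_dist_le (x y : EuclideanSpace ℝ (Fin n)) (i : Fin n) : |x i - y i| ≤ dist x y := by
  rw [EuclideanSpace.dist_eq, show |x i - y i| = Real.sqrt ((x i - y i)^2) from
    (Real.sqrt_sq_eq_abs _).symm]
  apply Real.sqrt_le_sqrt
  have h := Finset.single_le_sum (f := fun k => dist (x k) (y k) ^ 2)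
    (fun k _ => sq_nonneg _) (Finset.mem_univ i)
  simpa [Real.dist_eq] using h

lemma unit_angle_coords {v : EuclideanSpace ℝ (Fin n)} {j : Fin n} {δ : ℝ}
    (hv : ‖v‖ = 1) (hδ0 : 0 < δ) (hδ : δ ≤ 1/2)
    (ha : InnerProductGeometry.angle v (EuclideanSpace.single j (1:ℝ)) ≤ δ) :
    1/2 ≤ v j ∧ ∀ i, i ≠ j → |v i| ≤ δ := by
  have hinner : (inner ℝ v (EuclideanSpace.single j (1:ℝ)) : ℝ) = v j := by
    rw [EuclideanSpace.inner_single_right]; simp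
  have hns : ‖EuclideanSpace.single j (1:ℝ)‖ = 1 := by
    rw [EuclideanSpace.norm_single]; norm_num
  unfold InnerProductGeometry.angle at ha
  rw [hinner, hns, hv] at ha
  simp only [one_mul, div_one] at ha
  have hb : -1 ≤ v j ∧ v j ≤ 1 := by
    have := abs_real_inner_le_norm v (EuclideanSpace.single j (1:ℝ))
    rw [hinner, hns, hv, one_mul] at this
    constructor <;> [linarith [neg_abs_le (v j)]; linarith [le_abs_self (v j)]]
  have hcos : Real.cos δ ≤ v j := by
    have h1 : Real.cos δ ≤ Real.cos (Real.arccos (v j)) :=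
      Real.cos_le_cos_of_nonneg_of_le_pi (Real.arccos_nonneg _)
        (by linarith [Real.pi_gt_three]) ha
    rwa [Real.cos_arccos hb.1 hb.2] at h1
  have hcos2 : 1 - δ^2/2 ≤ Real.cos δ := Real.one_sub_sq_div_two_le_cos
  have hvj : 1/2 ≤ v j := by nlinarith
  refine ⟨hvj, fun i hij => ?_⟩
  have hsum : ∑ k, (v k)^2 = 1 := by
    have h2 : ‖v‖^2 = ∑ k, (v k)^2 := by
      rw [EuclideanSpace.norm_eq, Real.sq_sqrt (Finset.sum_nonneg fun k _ => sq_nonneg _)]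
      simp [sq_abs]
    rw [hv] at h2; linarith [h2]
  have hpair : (v i)^2 + (v j)^2 ≤ 1 := by
    rw [← hsum]
    rw [← Finset.sum_pair (f := fun k => v k ^ 2) hij]
    exact Finset.sum_le_sum_of_subset_of_nonneg (Finset.subset_univ _)
      (fun k _ _ => sq_nonneg _)
  have hsq : (v i)^2 ≤ δ^2 := by nlinarith
  calc |v i| = Real.sqrt ((v i)^2) := (Real.sqrt_sq_eq_abs _).symm
    _ ≤ Real.sqrt (δ^2) := Real.sqrt_le_sqrt hsq
    _ = δ := Real.sqrt_sq hδ0.le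

lemma apply_line (p v : EuclideanSpace ℝ (Fin n)) (t : ℝ) (i : Fin n) :
    (p + t • v) i = p i + t * v i := rfl

/-- center of the transverse box of a tube over a cube -/
def boxCenter (p v c : EuclideanSpace ℝ (Fin n)) (j : Fin n) (i : Fin n) : ℝ :=
  p i + ((c j - p j) / (v j)) * v i

lemma tube_in_box {p v : EuclideanSpace ℝ (Fin n)} {j : Fin n} {δ W S : ℝ}
    (hδ0 : 0 < δ) (hδ : δ ≤ 1/2) (hv : ‖v‖ = 1)
    (ha : InnerProductGeometry.angle v (EuclideanSpace.single j (1:ℝ)) ≤ δ)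
    (hW : 1 ≤ W) (hS : 0 ≤ S) {c x : EuclideanSpace ℝ (Fin n)}
    (hx : x ∈ cube c S) (hxt : Metric.infDist x (line p v) ≤ W)
    (i : Fin n) (hij : i ≠ j) :
    |x i - boxCenter p v c j i| ≤ 2*W + 2*δ*(S+2*W) := by
  obtain ⟨hvj, hvi⟩ := unit_angle_coords hv hδ0 hδ ha
  obtain ⟨y, hyl, hyd⟩ : ∃ y ∈ line p v, dist x y < W + 1 :=
    (Metric.infDist_lt_iff (line_nonempty p v)).mp (lt_of_le_of_lt hxt (by linarith))
  obtain ⟨t, rfl⟩ := hyl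
  have hdxy : dist x (p + t • v) ≤ 2*W := by linarith
  have hvj0 : 0 < v j := by linarith
  set t0 := (c j - p j) / (v j) with ht0def
  have ht0 : t0 * v j = c j - p j := div_mul_cancel₀ _ (ne_of_gt hvj0)
  have h1 : |x j - (p j + t * v j)| ≤ 2*W := by
    have := (coord_dist_le x (p + t • v) j).trans hdxy
    rwa [apply_line] at this
  have hxj := hx j
  simp only [Set.mem_Icc] at hxj
  have h3 : |t * v j - t0 * v j| ≤ S + 2*W := by
    rw [ht0]
    rw [abs_le] at h1 ⊢
    constructor <;> [linarith [h1.2, hxj.1]; linarith [h1.1, hxj.2]]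
  have h4 : |t - t0| ≤ 2*(S+2*W) := by
    have h2 : |t - t0| * v j ≤ S + 2*W := by
      calc |t - t0| * v j = |(t - t0) * v j| := by
            rw [abs_mul, abs_of_pos hvj0]
        _ = |t * v j - t0 * v j| := by ring_nf
        _ ≤ S + 2*W := h3
    nlinarith [abs_nonneg (t - t0)]
  have h5 : |x i - (p i + t * v i)| ≤ 2*W := by
    have := (coord_dist_le x (p + t • v) i).trans hdxy
    rwa [apply_line] at this
  have h6 : |t * v i - t0 * v i| ≤ 2*(S+2*W) * δ := by
    calc |t * v i - t0 * v i| = |t - t0| * |v i| := by rw [← abs_mul]; ring_nf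
      _ ≤ 2*(S+2*W) * δ := by
          apply mul_le_mul h4 (hvi i hij) (abs_nonneg _) (by linarith)
  calc |x i - boxCenter p v c j i|
      = |(x i - (p i + t * v i)) + (t * v i - t0 * v i)| := by
        rw [boxCenter, ← ht0def]; ring_nf
    _ ≤ |x i - (p i + t * v i)| + |t * v i - t0 * v i| := abs_add_le _ _
    _ ≤ 2*W + 2*δ*(S+2*W) := by linarith


variable {ι : Type*} [DecidableEq ι] {A : ι → Type*} [∀ i, MeasurableSpace (A i)]
  (μ : ∀ i, Measure (A i))

theorem updateFinset_update_comm {x : ∀ i, A i} {s : Finset ι} {i : ι} (hi : i ∉ s)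
    (t : A i) (y : ∀ j : s, A j) :
    updateFinset (update x i t) s y = update (updateFinset x s y) i t := by
  funext k
  simp only [updateFinset, update]
  by_cases hk : k ∈ s
  · have : k ≠ i := fun h => hi (h ▸ hk)
    simp [hk, this]
  · by_cases hki : k = i
    · subst hki; simp [hk]
    · simp [hk, hki]

theorem lmarginal_update_of_indep [∀ i, SigmaFinite (μ i)] {s : Finset ι} {i : ι}
    {g : (∀ i, A i) → ℝ≥0∞} (hgi : ∀ x t, g (update x i t) = g x) (hi : i ∉ s)
    (x : ∀ i, A i) (t : A i) :
    (∫⋯∫⁻_s, g ∂μ) (update x i t) = (∫⋯∫⁻_s, g ∂μ) x := by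
  dsimp [lmarginal]
  congr 1
  funext y
  rw [updateFinset_update_comm hi, hgi]

theorem myLW_claim [Fintype ι] [∀ i, SigmaFinite (μ i)]
    {p : ℝ} (hp0 : 0 ≤ p) (hp1 : ((Fintype.card ι : ℝ) - 1) * p = 1)
    (g : ι → (∀ i, A i) → ℝ≥0∞) (hgm : ∀ j, Measurable (g j))
    (hgi : ∀ j x t, g j (update x j t) = g j x) (s : Finset ι) :
    (∫⋯∫⁻_s, (fun x => ∏ j, g j x ^ p) ∂μ)
      ≤ fun x => ∏ j, (∫⋯∫⁻_(s.erase j), g j ∂μ) x ^ p := by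
  classical
  induction s using Finset.induction with
  | empty => intro x; simp
  | @insert i s hi ih =>
    have hF : Measurable fun x => ∏ j, g j x ^ p :=
      Finset.measurable_prod _ (fun j _ => (hgm j).pow_const p)
    intro x
    rw [lmarginal_insert _ hF hi]
    have step1 : ∫⁻ t, (∫⋯∫⁻_s, (fun x => ∏ j, g j x ^ p) ∂μ) (update x i t) ∂μ i
        ≤ ∫⁻ t, ∏ j, (∫⋯∫⁻_(s.erase j), g j ∂μ) (update x i t) ^ p ∂μ i :=
      lintegral_mono fun t => ih _
    refine le_trans step1 ?_
    have hmeas : ∀ j, Measurable fun t : A i => (∫⋯∫⁻_(s.erase j), g j ∂μ) (update x i t) :=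
      fun j => ((hgm j).lmarginal μ).comp (measurable_update x)
    calc ∫⁻ t, ∏ j, (∫⋯∫⁻_(s.erase j), g j ∂μ) (update x i t) ^ p ∂μ i
        = ∫⁻ t, (∫⋯∫⁻_s, g i ∂μ) x ^ p *
            ∏ j ∈ univ.erase i, (∫⋯∫⁻_(s.erase j), g j ∂μ) (update x i t) ^ p ∂μ i := by
          congr 1; funext t
          rw [← Finset.mul_prod_erase univ _ (mem_univ i), Finset.erase_eq_of_notMem hi,
            lmarginal_update_of_indep μ (hgi i) hi]
      _ = (∫⋯∫⁻_s, g i ∂μ) x ^ p *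
            ∫⁻ t, ∏ j ∈ univ.erase i, (∫⋯∫⁻_(s.erase j), g j ∂μ) (update x i t) ^ p ∂μ i := by
          rw [lintegral_const_mul]
          exact Finset.measurable_prod _ fun j _ => (hmeas j).pow_const p
      _ ≤ (∫⋯∫⁻_s, g i ∂μ) x ^ p *
            ∏ j ∈ univ.erase i, (∫⁻ t, (∫⋯∫⁻_(s.erase j), g j ∂μ) (update x i t) ∂μ i) ^ p := by
          gcongr
          refine ENNReal.lintegral_prod_norm_pow_le _ (fun j _ => (hmeas j).aemeasurable) ?_
            (fun _ _ => hp0)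
          have hcard : 1 ≤ Fintype.card ι := Fintype.card_pos_iff.mpr ⟨i⟩
          rw [Finset.sum_const, Finset.card_erase_of_mem (mem_univ i), card_univ, nsmul_eq_mul]
          push_cast [Nat.cast_sub hcard]
          linear_combination hp1
      _ = ∏ j, (∫⋯∫⁻_((insert i s).erase j), g j ∂μ) x ^ p := by
          rw [← Finset.mul_prod_erase univ
            (fun j => (∫⋯∫⁻_((insert i s).erase j), g j ∂μ) x ^ p) (mem_univ i),
            Finset.erase_insert hi]
          congr 1
          refine Finset.prod_congr rfl fun j hj => ?_
          have hij : j ≠ i := (Finset.mem_erase.mp hj).1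
          have hi' : i ∉ s.erase j := fun h => hi (Finset.mem_of_mem_erase h)
          rw [← lmarginal_insert _ (hgm j) hi', Finset.erase_insert_of_ne hij.symm]

theorem myLW [Fintype ι] [∀ i, SigmaFinite (μ i)]
    {p : ℝ} (hp0 : 0 ≤ p) (hp1 : ((Fintype.card ι : ℝ) - 1) * p = 1)
    (g : ι → (∀ i, A i) → ℝ≥0∞) (hgm : ∀ j, Measurable (g j))
    (hgi : ∀ j x t, g j (update x j t) = g j x) (x₀ : ∀ i, A i) :
    ∫⁻ x, ∏ j, g j x ^ p ∂(Measure.pi μ)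
      ≤ ∏ j, (∫⋯∫⁻_(univ.erase j), g j ∂μ) x₀ ^ p := by
  have h := myLW_claim μ hp0 hp1 g hgm hgi univ x₀
  simpa [lmarginal_univ] using h


variable {n : ℕ}

-- measurability helpers

lemma measurable_tubeFn (A : Set (EuclideanSpace ℝ (Fin n))) (W : ℝ) :
    Measurable (tubeFn A W) :=
  measurable_const.indicator
    (measurableSet_le (Metric.continuous_infDist_pt A).measurable measurable_const)

lemma measurable_coord (i : Fin n) :
    Measurable fun x : EuclideanSpace ℝ (Fin n) => x i :=
  (measurable_pi_apply i).comp ((MeasurableEquiv.toLp 2 (Fin n → ℝ)).symm).measurable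

lemma measurableSet_cube (c : EuclideanSpace ℝ (Fin n)) (S : ℝ) :
    MeasurableSet (cube c S) := by
  have h : cube c S
      = ⋂ i, (fun x : EuclideanSpace ℝ (Fin n) => x i) ⁻¹' Set.Icc (c i) (c i + S) := by
    ext x; simp [cube, Set.mem_iInter]
  rw [h]
  exact MeasurableSet.iInter fun i => (measurable_coord i) measurableSet_Icc

def cubeO (c : EuclideanSpace ℝ (Fin n)) (S : ℝ) : Set (EuclideanSpace ℝ (Fin n)) :=
  {x | ∀ i, x i ∈ Set.Ico (c i) (c i + S)}

lemma measurableSet_cubeO (c : EuclideanSpace ℝ (Fin n)) (S : ℝ) :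
    MeasurableSet (cubeO c S) := by
  have h : cubeO c S
      = ⋂ i, (fun x : EuclideanSpace ℝ (Fin n) => x i) ⁻¹' Set.Ico (c i) (c i + S) := by
    ext x; simp [cubeO, Set.mem_iInter]
  rw [h]
  exact MeasurableSet.iInter fun i => (measurable_coord i) measurableSet_Ico

lemma volume_cube (c : EuclideanSpace ℝ (Fin n)) {S : ℝ} (hS : 0 ≤ S) :
    volume (cube c S) = ENNReal.ofReal S ^ n := by
  have he : cube c S = ((MeasurableEquiv.toLp 2 (Fin n → ℝ)).symm) ⁻¹'
      (Set.univ.pi fun i => Set.Icc (c i) (c i + S)) := by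
    ext x
    simp only [cube, Set.mem_setOf_eq, Set.mem_preimage, Set.mem_univ_pi]
    rfl
  rw [he, MeasurePreserving.measure_preimage
    (EuclideanSpace.volume_preserving_symm_measurableEquiv_toLp (Fin n))
    (MeasurableSet.univ_pi fun i => measurableSet_Icc).nullMeasurableSet]
  rw [volume_pi_pi]
  simp [Real.volume_Icc]

lemma volume_cubeO (c : EuclideanSpace ℝ (Fin n)) {S : ℝ} (hS : 0 ≤ S) :
    volume (cubeO c S) = ENNReal.ofReal S ^ n := by
  have he : cubeO c S = ((MeasurableEquiv.toLp 2 (Fin n → ℝ)).symm) ⁻¹'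
      (Set.univ.pi fun i => Set.Ico (c i) (c i + S)) := by
    ext x
    simp only [cubeO, Set.mem_setOf_eq, Set.mem_preimage, Set.mem_univ_pi]
    rfl
  rw [he, MeasurePreserving.measure_preimage
    (EuclideanSpace.volume_preserving_symm_measurableEquiv_toLp (Fin n))
    (MeasurableSet.univ_pi fun i => measurableSet_Ico).nullMeasurableSet]
  rw [volume_pi_pi]
  simp [Real.volume_Ico]

lemma lintegral_transfer (f : (Fin n → ℝ) → ℝ≥0∞) (hf : Measurable f) :
    ∫⁻ x : EuclideanSpace ℝ (Fin n), f ((MeasurableEquiv.toLp 2 (Fin n → ℝ)).symm x) ∂volume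
      = ∫⁻ y : (Fin n → ℝ), f y ∂volume :=
  (EuclideanSpace.volume_preserving_symm_measurableEquiv_toLp (Fin n)).lintegral_comp hf

theorem lmarginal_prod' {ι : Type*} [DecidableEq ι] {A : ι → Type*} [∀ i, MeasurableSpace (A i)]
    (μ : ∀ i, Measure (A i)) [∀ i, SigmaFinite (μ i)]
    (h : ∀ i, A i → ℝ≥0∞) (hm : ∀ i, Measurable (h i)) (s : Finset ι) :
    ∀ x, (∫⋯∫⁻_s, (fun y => ∏ i ∈ s, h i (y i)) ∂μ) x = ∏ i ∈ s, ∫⁻ t, h i t ∂μ i := by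
  induction s using Finset.induction with
  | empty => intro x; simp
  | @insert i s hi ih =>
    intro x
    have hmF : Measurable fun y : ∀ i, A i => ∏ i' ∈ insert i s, h i' (y i') :=
      Finset.measurable_prod _ fun i' _ => (hm i').comp (measurable_pi_apply i')
    rw [lmarginal_insert _ hmF hi]
    have key : ∀ z : ∀ i, A i,
        (∫⋯∫⁻_s, (fun y => ∏ i' ∈ insert i s, h i' (y i')) ∂μ) z
          = h i (z i) * (∫⋯∫⁻_s, (fun y => ∏ i' ∈ s, h i' (y i')) ∂μ) z := by
      intro z
      dsimp only [lmarginal]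
      have hG : Measurable fun y : (i' : {x // x ∈ s}) → A i' =>
          ∏ i' ∈ s, h i' (updateFinset z s y i') := by
        apply Finset.measurable_prod
        intro i' _
        exact (hm i').comp ((measurable_pi_apply i').comp measurable_updateFinset)
      rw [← lintegral_const_mul _ hG]
      congr 1
      funext y
      rw [Finset.prod_insert hi]
      congr 2
      simp [updateFinset, hi]
    simp_rw [key, update_self, ih]
    rw [lintegral_mul_const _ (hm i), Finset.prod_insert hi]

theorem scale_step (hn : 2 ≤ n) {δ S W : ℝ} (hδ0 : 0 < δ) (hδ : δ ≤ 1/2) (hS : 0 < S)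
    (hW : 1 ≤ W) (N : Fin n → ℕ) (P V : (j : Fin n) → Fin (N j) → EuclideanSpace ℝ (Fin n))
    (hv : ∀ j a, ‖V j a‖ = 1)
    (hang : ∀ j a, InnerProductGeometry.angle (V j a) (EuclideanSpace.single j (1:ℝ)) ≤ δ)
    (c : EuclideanSpace ℝ (Fin n)) :
    ∫⁻ x in cube c S,
        ∏ j, (∑ a, tubeFn (line (P j a) (V j a)) W x) ^ ((1:ℝ)/((n:ℝ)-1))
      ≤ ENNReal.ofReal (4*W + 4*δ*(S+2*W)) ^ n
          * ∏ j, (N j : ℝ≥0∞) ^ ((1:ℝ)/((n:ℝ)-1)) := by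
  classical
  set pe : ℝ := (1:ℝ)/((n:ℝ)-1) with hpedef
  have hn1 : (1:ℝ) ≤ (n:ℝ) - 1 := by
    have : (2:ℝ) ≤ (n:ℝ) := by exact_mod_cast hn
    linarith
  have hpe0 : 0 ≤ pe := by positivity
  have hpe1 : ((n:ℝ) - 1) * pe = 1 := by
    rw [hpedef]; field_simp
  set halfL : ℝ := 2*W + 2*δ*(S+2*W) with hhalfLdef
  have hhalfL : 0 < halfL := by nlinarith
  -- the cylinder majorants
  set g : (j : Fin n) → (Fin n → ℝ) → ℝ≥0∞ := fun j y => ∑ a, ∏ i ∈ univ.erase j,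
    Set.indicator (Set.Icc (boxCenter (P j a) (V j a) c j i - halfL)
      (boxCenter (P j a) (V j a) c j i + halfL)) (fun _ => (1:ℝ≥0∞)) (y i) with hgdef
  have hgm : ∀ j, Measurable (g j) := by
    intro j
    apply Finset.measurable_sum
    intro a _
    apply Finset.measurable_prod
    intro i _
    exact (measurable_const.indicator measurableSet_Icc).comp (measurable_pi_apply i)
  have hgi : ∀ j x t, g j (update x j t) = g j x := by
    intro j x t
    rw [hgdef]
    refine Finset.sum_congr rfl fun a _ => Finset.prod_congr rfl fun i hi => ?_
    rw [update_of_ne (Finset.mem_erase.mp hi).1]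
  -- pointwise domination on the cube
  have hdom : ∀ x : EuclideanSpace ℝ (Fin n), x ∈ cube c S → ∀ j,
      (∑ a, tubeFn (line (P j a) (V j a)) W x)
        ≤ g j ((MeasurableEquiv.toLp 2 (Fin n → ℝ)).symm x) := by
    intro x hx j
    rw [hgdef]
    apply Finset.sum_le_sum
    intro a _
    by_cases hxt : Metric.infDist x (line (P j a) (V j a)) ≤ W
    · have h1 : tubeFn (line (P j a) (V j a)) W x = 1 :=
        Set.indicator_of_mem (s := {y : EuclideanSpace ℝ (Fin n) |
          Metric.infDist y (line (P j a) (V j a)) ≤ W}) hxt 1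
      rw [h1]
      apply le_of_eq
      symm
      apply Finset.prod_eq_one
      intro i hi
      have hij : i ≠ j := (Finset.mem_erase.mp hi).1
      have hbox := tube_in_box hδ0 hδ (hv j a) (hang j a) hW hS.le hx hxt i hij
      have hcoord : ((MeasurableEquiv.toLp 2 (Fin n → ℝ)).symm x) i = x i := rfl
      have hmemIcc : ((MeasurableEquiv.toLp 2 (Fin n → ℝ)).symm x) i ∈
          Set.Icc (boxCenter (P j a) (V j a) c j i - halfL)
            (boxCenter (P j a) (V j a) c j i + halfL) := by
        rw [hcoord, Set.mem_Icc]
        rw [abs_le] at hbox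
        constructor <;> [linarith [hbox.1]; linarith [hbox.2]]
      exact Set.indicator_of_mem hmemIcc _
    · have h0 : tubeFn (line (P j a) (V j a)) W x = 0 :=
        Set.indicator_of_notMem (s := {y : EuclideanSpace ℝ (Fin n) |
          Metric.infDist y (line (P j a) (V j a)) ≤ W}) hxt 1
      rw [h0]
      exact zero_le
  -- main chain
  have hmeasF : Measurable fun y : Fin n → ℝ => ∏ j, (g j y) ^ pe :=
    Finset.measurable_prod _ fun j _ => (hgm j).pow_const pe
  calc ∫⁻ x in cube c S,
        ∏ j, (∑ a, tubeFn (line (P j a) (V j a)) W x) ^ pe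
      = ∫⁻ x, (cube c S).indicator
          (fun x => ∏ j, (∑ a, tubeFn (line (P j a) (V j a)) W x) ^ pe) x := by
        rw [lintegral_indicator (measurableSet_cube c S)]
    _ ≤ ∫⁻ x : EuclideanSpace ℝ (Fin n),
          ∏ j, (g j ((MeasurableEquiv.toLp 2 (Fin n → ℝ)).symm x)) ^ pe := by
        apply lintegral_mono
        intro x
        by_cases hx : x ∈ cube c S
        · rw [Set.indicator_of_mem hx]
          exact Finset.prod_le_prod' fun j _ => ENNReal.rpow_le_rpow (hdom x hx j) hpe0
        · rw [Set.indicator_of_notMem hx]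
          exact zero_le
    _ = ∫⁻ y : (Fin n → ℝ), ∏ j, (g j y) ^ pe ∂volume := lintegral_transfer _ hmeasF
    _ = ∫⁻ y, ∏ j, (g j y) ^ pe ∂(Measure.pi fun _ => (volume : Measure ℝ)) := by
        rw [← volume_pi]
    _ ≤ ∏ j, (∫⋯∫⁻_(univ.erase j), g j ∂(fun _ => (volume : Measure ℝ))) 0 ^ pe := by
        apply myLW _ hpe0 _ g hgm hgi
        simp only [Fintype.card_fin]
        exact hpe1
    _ ≤ ENNReal.ofReal (4*W + 4*δ*(S+2*W)) ^ n * ∏ j, (N j : ℝ≥0∞) ^ pe := by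
        have hmarg : ∀ j, (∫⋯∫⁻_(univ.erase j), g j ∂(fun _ => (volume : Measure ℝ))) 0
            = (N j : ℝ≥0∞) * ENNReal.ofReal (2*halfL) ^ (n-1) := by
          intro j
          have hsplit : (∫⋯∫⁻_(univ.erase j), g j ∂(fun _ => (volume : Measure ℝ))) 0
              = ∑ a, (∫⋯∫⁻_(univ.erase j), (fun y => ∏ i ∈ univ.erase j,
                  Set.indicator (Set.Icc (boxCenter (P j a) (V j a) c j i - halfL)
                    (boxCenter (P j a) (V j a) c j i + halfL)) (fun _ => (1:ℝ≥0∞)) (y i))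
                  ∂(fun _ => (volume : Measure ℝ))) 0 := by
            rw [hgdef]
            dsimp only [lmarginal]
            rw [lintegral_finset_sum]
            intro a _
            exact (Finset.measurable_prod _ fun i _ =>
              (measurable_const.indicator measurableSet_Icc).comp (measurable_pi_apply i)).comp
              measurable_updateFinset
          rw [hsplit]
          have heach : ∀ a : Fin (N j), (∫⋯∫⁻_(univ.erase j), (fun y => ∏ i ∈ univ.erase j,
              Set.indicator (Set.Icc (boxCenter (P j a) (V j a) c j i - halfL)
                (boxCenter (P j a) (V j a) c j i + halfL)) (fun _ => (1:ℝ≥0∞)) (y i))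
              ∂(fun _ => (volume : Measure ℝ))) 0 = ENNReal.ofReal (2*halfL) ^ (n-1) := by
            intro a
            rw [lmarginal_prod' _ _ (fun i =>
              measurable_const.indicator measurableSet_Icc) (univ.erase j) 0]
            have hint : ∀ i : Fin n, ∫⁻ t : ℝ, Set.indicator
                (Set.Icc (boxCenter (P j a) (V j a) c j i - halfL)
                  (boxCenter (P j a) (V j a) c j i + halfL)) (fun _ => (1:ℝ≥0∞)) t ∂volume
                = ENNReal.ofReal (2*halfL) := by
              intro i
              rw [lintegral_indicator measurableSet_Icc]
              simp only [lintegral_const, Measure.restrict_apply, MeasurableSet.univ,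
                Set.univ_inter, one_mul]
              rw [Real.volume_Icc]
              congr 1
              ring
            simp_rw [hint]
            rw [Finset.prod_const, Finset.card_erase_of_mem (Finset.mem_univ j), card_univ,
              Fintype.card_fin]
          simp_rw [heach]
          rw [Finset.sum_const, card_univ, Fintype.card_fin, nsmul_eq_mul]
        have hB : (ENNReal.ofReal (2*halfL) ^ (n-1)) ^ pe = ENNReal.ofReal (2*halfL) := by
          rw [← ENNReal.rpow_natCast, ← ENNReal.rpow_mul,
            Nat.cast_sub (by omega : 1 ≤ n), Nat.cast_one, hpe1, ENNReal.rpow_one]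
        refine le_of_eq ?_
        calc ∏ j, (∫⋯∫⁻_(univ.erase j), g j ∂(fun _ => (volume : Measure ℝ))) 0 ^ pe
            = ∏ j, ((N j : ℝ≥0∞) * ENNReal.ofReal (2*halfL) ^ (n-1)) ^ pe := by
              refine Finset.prod_congr rfl fun j _ => ?_
              rw [hmarg j]
          _ = ∏ j, ((N j : ℝ≥0∞) ^ pe * ENNReal.ofReal (2*halfL)) := by
              refine Finset.prod_congr rfl fun j _ => ?_
              rw [ENNReal.mul_rpow_of_nonneg _ _ hpe0, hB]
          _ = (∏ j, (N j : ℝ≥0∞) ^ pe) * ENNReal.ofReal (2*halfL) ^ n := by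
              rw [Finset.prod_mul_distrib, Finset.prod_const, card_univ, Fintype.card_fin]
          _ = ENNReal.ofReal (4*W + 4*δ*(S+2*W)) ^ n * ∏ j, (N j : ℝ≥0∞) ^ pe := by
              rw [mul_comm]
              congr 2
              rw [hhalfLdef]
              ring_nf


lemma tubeFn_le_one (A : Set (EuclideanSpace ℝ (Fin n))) (W : ℝ)
    (x : EuclideanSpace ℝ (Fin n)) : tubeFn A W x ≤ 1 := by
  rw [tubeFn]
  by_cases hx : x ∈ {y : EuclideanSpace ℝ (Fin n) | Metric.infDist y A ≤ W}
  · rw [Set.indicator_of_mem hx]; exact le_refl _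
  · rw [Set.indicator_of_notMem hx]; exact zero_le

lemma measurable_prodTube {N : Fin n → ℕ}
    (P V : (j : Fin n) → Fin (N j) → EuclideanSpace ℝ (Fin n)) (W q : ℝ) :
    Measurable fun x => ∏ j, (∑ b, tubeFn (line (P j b) (V j b)) W x) ^ q :=
  Finset.measurable_prod _ fun j _ =>
    (Finset.measurable_sum _ fun b _ => measurable_tubeFn _ _).pow_const _

lemma dist_le_of_mem_cube {c : EuclideanSpace ℝ (Fin n)} {s : ℝ} (hs : 0 ≤ s)
    {x y : EuclideanSpace ℝ (Fin n)} (hx : x ∈ cube c s) (hy : y ∈ cube c s) :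
    dist x y ≤ Real.sqrt n * s := by
  rw [EuclideanSpace.dist_eq]
  have hb : ∀ i, dist (x i) (y i) ^ 2 ≤ s ^ 2 := by
    intro i
    have hxi := hx i; have hyi := hy i
    simp only [Set.mem_Icc] at hxi hyi
    rw [Real.dist_eq]
    have habs : |x i - y i| ≤ s := abs_le.mpr ⟨by linarith, by linarith⟩
    nlinarith [abs_nonneg (x i - y i), sq_abs (x i - y i)]
  calc Real.sqrt (∑ i, dist (x i) (y i) ^ 2)
      ≤ Real.sqrt (∑ _i : Fin n, s ^ 2) :=
        Real.sqrt_le_sqrt (Finset.sum_le_sum fun i _ => hb i)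
    _ = Real.sqrt ((n : ℝ) * s ^ 2) := by
        rw [Finset.sum_const, card_univ, Fintype.card_fin, nsmul_eq_mul]
    _ ≤ Real.sqrt n * s := by
        rw [Real.sqrt_mul (Nat.cast_nonneg n), Real.sqrt_sq hs]

lemma cube_subset_iUnion {c : EuclideanSpace ℝ (Fin n)} {a : ℝ} (ha : 0 < a) {K : ℕ}
    (hK : 1 ≤ K) {A : ℝ} (hKa : A ≤ K * a) :
    cube c A ⊆ ⋃ k : Fin n → Fin K,
      cube (WithLp.toLp 2 (fun i => c i + ((k i : ℕ) : ℝ) * a : Fin n → ℝ)) a := by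
  intro x hx
  have hchoice : ∀ i, ∃ m : Fin K,
      c i + ((m : ℕ) : ℝ) * a ≤ x i ∧ x i ≤ c i + ((m : ℕ) : ℝ) * a + a := by
    intro i
    have hxi := hx i
    simp only [Set.mem_Icc] at hxi
    set u := x i - c i with hu
    have hu0 : 0 ≤ u := by simp only [hu]; linarith [hxi.1]
    have huA : u ≤ A := by simp only [hu]; linarith [hxi.2]
    by_cases hcase : ⌊u / a⌋₊ ≤ K - 1
    · refine ⟨⟨⌊u / a⌋₊, by omega⟩, ?_, ?_⟩
      · have h1 : (⌊u / a⌋₊ : ℝ) ≤ u / a := Nat.floor_le (by positivity)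
        have h2 : (⌊u / a⌋₊ : ℝ) * a ≤ u := by
          rw [← le_div_iff₀ ha] at *; linarith
        simp only [hu] at h2 ⊢
        linarith
      · have h1 : u / a < ⌊u / a⌋₊ + 1 := Nat.lt_floor_add_one (u / a)
        have h2 : u < ((⌊u / a⌋₊ : ℝ) + 1) * a := by
          rw [← div_lt_iff₀ ha]; linarith
        simp only [hu] at h2 ⊢
        linarith
    · push_neg at hcase
      refine ⟨⟨K - 1, by omega⟩, ?_, ?_⟩
      · have h1 : (⌊u / a⌋₊ : ℝ) ≤ u / a := Nat.floor_le (by positivity)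
        have h2 : (K : ℝ) ≤ (⌊u / a⌋₊ : ℝ) := by exact_mod_cast by omega
        have h3 : (K : ℝ) * a ≤ u := by
          rw [← le_div_iff₀ ha]; linarith
        have hc : ((K - 1 : ℕ) : ℝ) = (K : ℝ) - 1 := by
          push_cast [Nat.cast_sub hK]; ring
        simp only [hc, hu] at *
        nlinarith
      · have hc : ((K - 1 : ℕ) : ℝ) = (K : ℝ) - 1 := by
          push_cast [Nat.cast_sub hK]; ring
        simp only [hc, hu] at *
        nlinarith
  choose k hk using hchoice
  refine Set.mem_iUnion.mpr ⟨k, fun i => Set.mem_Icc.mpr ⟨(hk i).1, (hk i).2⟩⟩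

lemma cubeO_grid_disjoint {c : EuclideanSpace ℝ (Fin n)} {a : ℝ} (ha : 0 < a) {K : ℕ} :
    Pairwise (Function.onFun Disjoint fun k : Fin n → Fin K =>
      cubeO (WithLp.toLp 2 (fun i => c i + ((k i : ℕ) : ℝ) * a : Fin n → ℝ)) a) := by
  intro k k' hkk
  rw [Function.onFun, Set.disjoint_left]
  intro x hx hx'
  obtain ⟨i, hi⟩ : ∃ i, k i ≠ k' i := by
    by_contra h; push_neg at h; exact hkk (funext h)
  have h1 := hx i
  have h2 := hx' i
  simp only [Set.mem_Ico] at h1 h2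
  rcases Nat.lt_or_ge (k i : ℕ) (k' i : ℕ) with h | h
  · have hr : ((k i : ℕ) : ℝ) + 1 ≤ ((k' i : ℕ) : ℝ) := by exact_mod_cast h
    nlinarith [h1.1, h1.2, h2.1, h2.2]
  · have h' : (k' i : ℕ) < (k i : ℕ) := by
      rcases Nat.lt_or_ge (k' i : ℕ) (k i : ℕ) with h'' | h''
      · exact h''
      · exact absurd (Fin.ext (le_antisymm h h'')) hi.symm
    have hr : ((k' i : ℕ) : ℝ) + 1 ≤ ((k i : ℕ) : ℝ) := by exact_mod_cast h'
    nlinarith [h1.1, h1.2, h2.1, h2.2]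


set_option maxHeartbeats 2000000 in
/-- Iterated scale-step bound at powers of `δ⁻¹`: there is `C_n` such that for `0 < δ ≤ 1/2`
and lines making angle at most `δ` with the corresponding axes, for every `M : ℕ` and every
cube of side `δ^{-M}`, `∫_Q ∏_j (∑_a T_{j,a})^{1/(n-1)} ≤ C_n^M ∏_j N_j^{1/(n-1)}`. -/
theorem iterated_scale_step (n : ℕ) (hn : 2 ≤ n) :
    ∃ C : ℝ, 0 < C ∧
      ∀ (δ : ℝ), 0 < δ → δ ≤ 1 / 2 →
      ∀ (N : Fin n → ℕ) (p v : (j : Fin n) → Fin (N j) → EuclideanSpace ℝ (Fin n)),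
        (∀ j a, ‖v j a‖ = 1) →
        (∀ j a, InnerProductGeometry.angle (v j a) (EuclideanSpace.single j 1) ≤ δ) →
        ∀ (M : ℕ) (c : EuclideanSpace ℝ (Fin n)),
          ∫⁻ x in cube c (δ⁻¹ ^ M),
              ∏ j : Fin n, (∑ a : Fin (N j),
                tubeFn (line (p j a) (v j a)) 1 x) ^ ((1 : ℝ) / ((n : ℝ) - 1))
            ≤ ENNReal.ofReal (C ^ M) *
                ∏ j : Fin n, (N j : ℝ≥0∞) ^ ((1 : ℝ) / ((n : ℝ) - 1)) := by
  classical
  have hsn0 : 0 ≤ Real.sqrt n := Real.sqrt_nonneg _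
  have hC16 : (0:ℝ) < 16 + 8 * Real.sqrt n := by positivity
  refine ⟨(16 + 8 * Real.sqrt n) ^ n, by positivity, ?_⟩
  set C : ℝ := (16 + 8 * Real.sqrt n) ^ n with hCdef
  intro δ hδ0 hδ
  have hn1 : (1:ℝ) ≤ (n:ℝ) - 1 := by
    have h2n : (2:ℝ) ≤ (n:ℝ) := by exact_mod_cast hn
    linarith
  have hpe0 : (0:ℝ) ≤ (1:ℝ)/((n:ℝ)-1) := by positivity
  have hδi2 : (2:ℝ) ≤ δ⁻¹ := by
    rw [show δ⁻¹ = 1/δ from (one_div δ).symm, le_div_iff₀ hδ0]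
    linarith
  suffices h : ∀ M : ℕ, ∀ (N : Fin n → ℕ)
      (p v : (j : Fin n) → Fin (N j) → EuclideanSpace ℝ (Fin n)),
      (∀ j a, ‖v j a‖ = 1) →
      (∀ j a, InnerProductGeometry.angle (v j a) (EuclideanSpace.single j 1) ≤ δ) →
      ∀ c : EuclideanSpace ℝ (Fin n),
        ∫⁻ x in cube c (δ⁻¹ ^ M),
            ∏ j : Fin n, (∑ a : Fin (N j),
              tubeFn (line (p j a) (v j a)) 1 x) ^ ((1 : ℝ) / ((n : ℝ) - 1))
          ≤ ENNReal.ofReal (C ^ M) *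
              ∏ j : Fin n, (N j : ℝ≥0∞) ^ ((1 : ℝ) / ((n : ℝ) - 1)) by
    intro N p v hv hang M c
    exact h M N p v hv hang c
  intro M
  induction M with
  | zero =>
    intro N p v hv hang c
    rw [pow_zero, pow_zero]
    have hpt : ∀ x : EuclideanSpace ℝ (Fin n),
        ∏ j, (∑ a : Fin (N j), tubeFn (line (p j a) (v j a)) 1 x) ^ ((1:ℝ)/((n:ℝ)-1))
          ≤ ∏ j, (N j : ℝ≥0∞) ^ ((1:ℝ)/((n:ℝ)-1)) := by
      intro x
      refine Finset.prod_le_prod' fun j _ => ENNReal.rpow_le_rpow ?_ hpe0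
      calc ∑ a : Fin (N j), tubeFn (line (p j a) (v j a)) 1 x
          ≤ ∑ _a : Fin (N j), 1 := Finset.sum_le_sum fun a _ => tubeFn_le_one _ _ _
        _ = (N j : ℝ≥0∞) := by simp
    calc ∫⁻ x in cube c 1,
          ∏ j, (∑ a : Fin (N j), tubeFn (line (p j a) (v j a)) 1 x) ^ ((1:ℝ)/((n:ℝ)-1))
        ≤ ∫⁻ _x in cube c 1, ∏ j, (N j : ℝ≥0∞) ^ ((1:ℝ)/((n:ℝ)-1)) :=
          lintegral_mono fun x => hpt x
      _ = (∏ j, (N j : ℝ≥0∞) ^ ((1:ℝ)/((n:ℝ)-1))) * volume (cube c 1) :=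
          setLIntegral_const _ _
      _ ≤ ENNReal.ofReal 1 * ∏ j, (N j : ℝ≥0∞) ^ ((1:ℝ)/((n:ℝ)-1)) := by
          rw [volume_cube c (by norm_num : (0:ℝ) ≤ 1)]
          simp
  | succ M ih =>
    intro N p v hv hang c
    have ha0 : (0:ℝ) < δ⁻¹ ^ M := by positivity
    have ha1 : (1:ℝ) ≤ δ⁻¹ ^ M := one_le_pow₀ (by linarith)
    set a : ℝ := δ⁻¹ ^ M with hadef
    set A : ℝ := δ⁻¹ ^ (M+1) with hAdef
    have hAa : A = a * δ⁻¹ := by rw [hAdef, hadef, pow_succ]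
    have hA0 : 0 < A := by rw [hAa]; positivity
    have hδA : δ * A = a := by
      rw [hAa]
      field_simp
    set K : ℕ := ⌈δ⁻¹⌉₊ with hKdef
    have hK0 : 0 < K := Nat.ceil_pos.mpr (by linarith)
    have hK1 : 1 ≤ K := hK0
    have hKge : δ⁻¹ ≤ (K:ℝ) := Nat.le_ceil _
    have hKle : (K:ℝ) ≤ 2*δ⁻¹ := by
      have h := Nat.ceil_lt_add_one (show (0:ℝ) ≤ δ⁻¹ by linarith)
      linarith
    have hAKa : A ≤ K * a := by rw [hAa]; nlinarith
    have hKa2A : (K:ℝ) * a ≤ 2*A := by rw [hAa]; nlinarith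
    set R : ℝ := 1 + Real.sqrt n * a with hRdef
    have hR1 : 1 ≤ R := by rw [hRdef]; nlinarith
    set Asub : (Fin n → Fin K) → (j : Fin n) → Finset (Fin (N j)) := fun k j =>
      univ.filter fun b => ∃ y,
        y ∈ cube (WithLp.toLp 2 (fun i => c i + ((k i : ℕ) : ℝ) * a : Fin n → ℝ)) a ∧
        Metric.infDist y (line (p j b) (v j b)) ≤ 1 with hAsubdef
    -- Step 1: covering
    have hcover : ∫⁻ x in cube c A,
        ∏ j, (∑ b : Fin (N j), tubeFn (line (p j b) (v j b)) 1 x) ^ ((1:ℝ)/((n:ℝ)-1))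
        ≤ ∑ k : Fin n → Fin K,
            ∫⁻ x in cube (WithLp.toLp 2 (fun i => c i + ((k i : ℕ) : ℝ) * a : Fin n → ℝ)) a,
              ∏ j, (∑ b : Fin (N j), tubeFn (line (p j b) (v j b)) 1 x) ^ ((1:ℝ)/((n:ℝ)-1)) := by
      refine le_trans (lintegral_mono_set (cube_subset_iUnion ha0 hK1 hAKa)) ?_
      refine le_trans (lintegral_iUnion_le _ _) ?_
      rw [tsum_fintype]
    -- Step 2: per-subcube bound via induction hypothesis
    have hstep2 : ∀ k : Fin n → Fin K,
        ∫⁻ x in cube (WithLp.toLp 2 (fun i => c i + ((k i : ℕ) : ℝ) * a : Fin n → ℝ)) a,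
            ∏ j, (∑ b : Fin (N j), tubeFn (line (p j b) (v j b)) 1 x) ^ ((1:ℝ)/((n:ℝ)-1))
          ≤ ENNReal.ofReal (C ^ M) * ∏ j, ((Asub k j).card : ℝ≥0∞) ^ ((1:ℝ)/((n:ℝ)-1)) := by
      intro k
      set c' : EuclideanSpace ℝ (Fin n) :=
        (WithLp.toLp 2 (fun i => c i + ((k i : ℕ) : ℝ) * a : Fin n → ℝ)) with hc'def
      have hkey := ih (fun j => (Asub k j).card)
        (fun j b => p j ((Asub k j).equivFin.symm b))
        (fun j b => v j ((Asub k j).equivFin.symm b))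
        (fun j b => hv j _) (fun j b => hang j _) c'
      have hsum : ∀ (j : Fin n) (x : EuclideanSpace ℝ (Fin n)),
          ∑ b : Fin (Asub k j).card,
            tubeFn (line (p j ((Asub k j).equivFin.symm b))
              (v j ((Asub k j).equivFin.symm b))) 1 x
          = ∑ b ∈ Asub k j, tubeFn (line (p j b) (v j b)) 1 x := by
        intro j x
        calc ∑ b : Fin (Asub k j).card,
              tubeFn (line (p j ((Asub k j).equivFin.symm b))
                (v j ((Asub k j).equivFin.symm b))) 1 x
            = ∑ s : {b // b ∈ Asub k j}, tubeFn (line (p j s) (v j s)) 1 x :=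
              Fintype.sum_equiv (Asub k j).equivFin.symm _ _ (fun b => rfl)
          _ = ∑ b ∈ Asub k j, tubeFn (line (p j b) (v j b)) 1 x :=
              Finset.sum_coe_sort (Asub k j) (fun b => tubeFn (line (p j b) (v j b)) 1 x)
      have hcong : ∫⁻ x in cube c' a,
          ∏ j, (∑ b : Fin (N j), tubeFn (line (p j b) (v j b)) 1 x) ^ ((1:ℝ)/((n:ℝ)-1))
          = ∫⁻ x in cube c' a,
            ∏ j, (∑ b : Fin (Asub k j).card,
              tubeFn (line (p j ((Asub k j).equivFin.symm b))
                (v j ((Asub k j).equivFin.symm b))) 1 x) ^ ((1:ℝ)/((n:ℝ)-1)) := by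
        refine setLIntegral_congr_fun (measurableSet_cube _ _) (fun x hx => ?_)
        refine Finset.prod_congr rfl fun j _ => ?_
        rw [hsum j x]
        congr 1
        refine (Finset.sum_subset (Finset.subset_univ _) fun b _ hb => ?_).symm
        by_cases h1 : Metric.infDist x (line (p j b) (v j b)) ≤ 1
        · exfalso
          apply hb
          rw [hAsubdef]
          simp only [Finset.mem_filter, Finset.mem_univ, true_and]
          exact ⟨x, hx, h1⟩
        · exact Set.indicator_of_notMem
            (s := {y : EuclideanSpace ℝ (Fin n) |
              Metric.infDist y (line (p j b) (v j b)) ≤ 1}) h1 1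
      rw [hcong]
      exact hkey
    -- Step 3: counting bound
    have hcount : ∀ (k : Fin n → Fin K) (j : Fin n) (x : EuclideanSpace ℝ (Fin n)),
        x ∈ cube (WithLp.toLp 2 (fun i => c i + ((k i : ℕ) : ℝ) * a : Fin n → ℝ)) a →
        ((Asub k j).card : ℝ≥0∞) ≤ ∑ b : Fin (N j), tubeFn (line (p j b) (v j b)) R x := by
      intro k j x hx
      calc ((Asub k j).card : ℝ≥0∞) = ∑ _b ∈ Asub k j, 1 := by
            rw [Finset.sum_const, nsmul_eq_mul, mul_one]
        _ = ∑ b ∈ Asub k j, tubeFn (line (p j b) (v j b)) R x := by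
            refine Finset.sum_congr rfl fun b hb => ?_
            rw [hAsubdef] at hb
            simp only [Finset.mem_filter, Finset.mem_univ, true_and] at hb
            obtain ⟨y, hy, hyt⟩ := hb
            have hdist : Metric.infDist x (line (p j b) (v j b)) ≤ R := by
              have h1 := Metric.infDist_le_infDist_add_dist (x := x) (y := y)
                (s := line (p j b) (v j b))
              have h2 := dist_le_of_mem_cube (le_of_lt ha0) hx hy
              rw [hRdef]
              linarith
            exact (Set.indicator_of_mem
              (s := {y' : EuclideanSpace ℝ (Fin n) |
                Metric.infDist y' (line (p j b) (v j b)) ≤ R}) hdist 1).symm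
        _ ≤ ∑ b : Fin (N j), tubeFn (line (p j b) (v j b)) R x :=
            Finset.sum_le_sum_of_subset (Finset.subset_univ _)
    -- Step 4: lower bound on integral of coarse tubes over small open cubes
    have hlow : ∀ k : Fin n → Fin K,
        (∏ j, ((Asub k j).card : ℝ≥0∞) ^ ((1:ℝ)/((n:ℝ)-1))) * ENNReal.ofReal a ^ n
          ≤ ∫⁻ x in cubeO (WithLp.toLp 2 (fun i => c i + ((k i : ℕ) : ℝ) * a : Fin n → ℝ)) a,
              ∏ j, (∑ b : Fin (N j), tubeFn (line (p j b) (v j b)) R x) ^ ((1:ℝ)/((n:ℝ)-1)) := by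
      intro k
      rw [← volume_cubeO (WithLp.toLp 2 (fun i => c i + ((k i : ℕ) : ℝ) * a : Fin n → ℝ)) (le_of_lt ha0),
        ← setLIntegral_const]
      refine setLIntegral_mono (measurable_prodTube p v R ((1:ℝ)/((n:ℝ)-1))) fun x hx => ?_
      have hx' : x ∈ cube (WithLp.toLp 2 (fun i => c i + ((k i : ℕ) : ℝ) * a : Fin n → ℝ)) a := by
        intro i
        have h1 := hx i
        simp only [Set.mem_Ico] at h1
        exact Set.mem_Icc.mpr ⟨h1.1, le_of_lt h1.2⟩
      exact Finset.prod_le_prod' fun j _ =>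
        ENNReal.rpow_le_rpow (hcount k j x hx') hpe0
    -- Step 5: disjoint sum over open cubes
    have hsumO : ∑ k : Fin n → Fin K,
        ∫⁻ x in cubeO (WithLp.toLp 2 (fun i => c i + ((k i : ℕ) : ℝ) * a : Fin n → ℝ)) a,
          ∏ j, (∑ b : Fin (N j), tubeFn (line (p j b) (v j b)) R x) ^ ((1:ℝ)/((n:ℝ)-1))
        ≤ ∫⁻ x in cube c (2*A),
            ∏ j, (∑ b : Fin (N j), tubeFn (line (p j b) (v j b)) R x) ^ ((1:ℝ)/((n:ℝ)-1)) := by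
      rw [← tsum_fintype (L := SummationFilter.unconditional _), ← lintegral_iUnion (fun k => measurableSet_cubeO _ _)
        (cubeO_grid_disjoint (c := c) ha0 (K := K))]
      refine lintegral_mono_set (Set.iUnion_subset fun k x hx i => ?_)
      have h1 := hx i
      simp only [Set.mem_Ico] at h1
      have hki : ((k i : ℕ) : ℝ) + 1 ≤ (K:ℝ) := by exact_mod_cast (k i).2
      have hnn : 0 ≤ ((k i : ℕ) : ℝ) * a := by positivity
      refine Set.mem_Icc.mpr ⟨by linarith [h1.1], ?_⟩
      have h3 : ((k i : ℕ) : ℝ) * a + a ≤ (K:ℝ) * a := by nlinarith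
      linarith [h1.2, hKa2A]
    -- Step 6: scale step at coarse width
    have hscale := scale_step hn hδ0 hδ (show (0:ℝ) < 2*A by linarith) hR1 N p v hv hang c
    have harith : 4*R + 4*δ*(2*A+2*R) ≤ (16 + 8*Real.sqrt n) * a := by
      have h2 : δ * R ≤ R / 2 := by nlinarith
      rw [hRdef]
      nlinarith [hδA, hδ0.le, ha1, hsn0]
    have hTbound : (∑ k : Fin n → Fin K,
        ∏ j, ((Asub k j).card : ℝ≥0∞) ^ ((1:ℝ)/((n:ℝ)-1))) * ENNReal.ofReal a ^ n
        ≤ (ENNReal.ofReal (16+8*Real.sqrt n) ^ n *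
            ∏ j, (N j : ℝ≥0∞) ^ ((1:ℝ)/((n:ℝ)-1))) * ENNReal.ofReal a ^ n := by
      calc (∑ k : Fin n → Fin K,
            ∏ j, ((Asub k j).card : ℝ≥0∞) ^ ((1:ℝ)/((n:ℝ)-1))) * ENNReal.ofReal a ^ n
          = ∑ k : Fin n → Fin K,
              (∏ j, ((Asub k j).card : ℝ≥0∞) ^ ((1:ℝ)/((n:ℝ)-1))) * ENNReal.ofReal a ^ n := by
            rw [Finset.sum_mul]
        _ ≤ ∑ k : Fin n → Fin K,
              ∫⁻ x in cubeO (WithLp.toLp 2 (fun i => c i + ((k i : ℕ) : ℝ) * a : Fin n → ℝ)) a,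
                ∏ j, (∑ b : Fin (N j),
                  tubeFn (line (p j b) (v j b)) R x) ^ ((1:ℝ)/((n:ℝ)-1)) :=
            Finset.sum_le_sum fun k _ => hlow k
        _ ≤ ∫⁻ x in cube c (2*A),
              ∏ j, (∑ b : Fin (N j), tubeFn (line (p j b) (v j b)) R x) ^ ((1:ℝ)/((n:ℝ)-1)) :=
            hsumO
        _ ≤ ENNReal.ofReal (4*R + 4*δ*(2*A+2*R)) ^ n *
              ∏ j, (N j : ℝ≥0∞) ^ ((1:ℝ)/((n:ℝ)-1)) := hscale
        _ ≤ (ENNReal.ofReal (16+8*Real.sqrt n) * ENNReal.ofReal a) ^ n *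
              ∏ j, (N j : ℝ≥0∞) ^ ((1:ℝ)/((n:ℝ)-1)) := by
            gcongr
            rw [← ENNReal.ofReal_mul hC16.le]
            exact ENNReal.ofReal_le_ofReal harith
        _ = (ENNReal.ofReal (16+8*Real.sqrt n) ^ n *
              ∏ j, (N j : ℝ≥0∞) ^ ((1:ℝ)/((n:ℝ)-1))) * ENNReal.ofReal a ^ n := by
            rw [mul_pow]
            ring
    have haan0 : ENNReal.ofReal a ^ n ≠ 0 :=
      pow_ne_zero _ (by simp [ENNReal.ofReal_eq_zero]; linarith)
    have haantop : ENNReal.ofReal a ^ n ≠ ⊤ :=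
      ENNReal.pow_ne_top ENNReal.ofReal_ne_top
    have hT : ∑ k : Fin n → Fin K,
        ∏ j, ((Asub k j).card : ℝ≥0∞) ^ ((1:ℝ)/((n:ℝ)-1))
        ≤ ENNReal.ofReal (16+8*Real.sqrt n) ^ n *
            ∏ j, (N j : ℝ≥0∞) ^ ((1:ℝ)/((n:ℝ)-1)) :=
      (ENNReal.mul_le_mul_iff_left haan0 haantop).mp hTbound
    -- final chain
    calc ∫⁻ x in cube c A,
          ∏ j, (∑ b : Fin (N j), tubeFn (line (p j b) (v j b)) 1 x) ^ ((1:ℝ)/((n:ℝ)-1))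
        ≤ ∑ k : Fin n → Fin K,
            ∫⁻ x in cube (WithLp.toLp 2 (fun i => c i + ((k i : ℕ) : ℝ) * a : Fin n → ℝ)) a,
              ∏ j, (∑ b : Fin (N j), tubeFn (line (p j b) (v j b)) 1 x) ^ ((1:ℝ)/((n:ℝ)-1)) :=
          hcover
      _ ≤ ∑ k : Fin n → Fin K, ENNReal.ofReal (C ^ M) *
            ∏ j, ((Asub k j).card : ℝ≥0∞) ^ ((1:ℝ)/((n:ℝ)-1)) :=
          Finset.sum_le_sum fun k _ => hstep2 k
      _ = ENNReal.ofReal (C ^ M) * ∑ k : Fin n → Fin K,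
            ∏ j, ((Asub k j).card : ℝ≥0∞) ^ ((1:ℝ)/((n:ℝ)-1)) := by
          rw [← Finset.mul_sum]
      _ ≤ ENNReal.ofReal (C ^ M) * (ENNReal.ofReal (16+8*Real.sqrt n) ^ n *
            ∏ j, (N j : ℝ≥0∞) ^ ((1:ℝ)/((n:ℝ)-1))) := mul_le_mul_right hT _
      _ ≤ ENNReal.ofReal (C ^ (M+1)) * ∏ j, (N j : ℝ≥0∞) ^ ((1:ℝ)/((n:ℝ)-1)) := by
          rw [← mul_assoc]
          gcongr
          rw [← ENNReal.ofReal_pow hC16.le, ← ENNReal.ofReal_mul (by positivity)]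
          apply ENNReal.ofReal_le_ofReal
          rw [hCdef, pow_succ]
end
end
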